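/- arXiv:2511.01084 — 10 statements merged into one kernel-verified Lean document; each statement's English description precedes it below -/
import Mathlib

section
/- Let p > 2 and c > 0. Set S = √(1 + c² + 2c·cos(2π/p)) and R = 2c·cos(π/p)/(c − 1 + S). Then ((1 + c + S)/2)·(sin(π/p))^{-2}·(1 + R² − 2R·cos(π/p)) = c + R². Consequently, with A = 2^{-p/2}·((1 + c + S)·(sin(π/p))^{-2})^{p/2}, one has A·((1 + R² + 2R·cos(π − π/p))/(2R))^{p/2} = ((c + R²)/(2R))^{p/2}, i.e. equality holds in the inequality of Theorem 1.3 at t = π − π/p and r = R (where the correction term B·h_p(π − π/p) vanishes since h_p(π − π/p) = 0). -/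
open Real

set_option maxHeartbeats 1000000 in
/-- The equality case of Theorem 1.3: at `t = π - π/p` and `r = R` the main
inequality becomes an equality. -/
theorem equality_case_main_inequality
    (p c : ℝ) (hp : 2 < p) (hc : 0 < c)
    (S R A : ℝ)
    (hS : S = Real.sqrt (1 + c ^ 2 + 2 * c * Real.cos (2 * π / p)))
    (hR : R = 2 * c * Real.cos (π / p) / (c - 1 + S))
    (hA : A = (2 : ℝ) ^ (-(p / 2)) *
      ((1 + c + S) * (Real.sin (π / p)) ^ (-(2 : ℝ))) ^ (p / 2)) :
    ((1 + c + S) / 2) * (Real.sin (π / p)) ^ (-(2 : ℝ)) *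
        (1 + R ^ 2 - 2 * R * Real.cos (π / p)) = c + R ^ 2 ∧
    A * ((1 + R ^ 2 + 2 * R * Real.cos (π - π / p)) / (2 * R)) ^ (p / 2) =
      ((c + R ^ 2) / (2 * R)) ^ (p / 2) := by
  have hπ := Real.pi_pos
  have hp0 : 0 < p := by linarith
  have hθ0 : 0 < π / p := by positivity
  have hθlt : π / p < π / 2 := div_lt_div_of_pos_left hπ (by norm_num) hp
  set co := Real.cos (π / p) with hco
  set si := Real.sin (π / p) with hsi
  have hcopos : 0 < co := Real.cos_pos_of_mem_Ioo ⟨by linarith, hθlt⟩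
  have hsipos : 0 < si := Real.sin_pos_of_pos_of_lt_pi hθ0 (by linarith)
  have hpyth : si ^ 2 = 1 - co ^ 2 := by
    have := Real.sin_sq_add_cos_sq (π / p); rw [← hco, ← hsi] at this; linarith
  have hc2 : Real.cos (2 * π / p) = 2 * co ^ 2 - 1 := by
    rw [show 2 * π / p = 2 * (π / p) by ring, Real.cos_two_mul, hco]
  have harg : 1 + c ^ 2 + 2 * c * Real.cos (2 * π / p) = (c - 1) ^ 2 + 4 * c * co ^ 2 := by
    rw [hc2]; ring
  have hS2 : S ^ 2 = (c - 1) ^ 2 + 4 * c * co ^ 2 := by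
    rw [hS, harg]; exact Real.sq_sqrt (by positivity)
  have hSnn : 0 ≤ S := hS ▸ Real.sqrt_nonneg _
  have hS2pos : 0 < S ^ 2 := by rw [hS2]; positivity
  have hSpos : 0 < S := by nlinarith
  have hD : 0 < c - 1 + S := by
    rcases le_or_gt (c - 1 + S) 0 with h | h
    · exfalso
      nlinarith [mul_nonneg (by linarith : (0:ℝ) ≤ 1 - c - S)
        (by linarith : (0:ℝ) ≤ 1 - c + S), mul_pos (mul_pos hc hcopos) hcopos]
    · exact h
  have hSlt : S < 1 + c := by
    rcases lt_or_ge S (1 + c) with h | h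
    · exact h
    · exfalso
      nlinarith [mul_nonneg (by linarith : (0:ℝ) ≤ S - 1 - c)
        (by linarith : (0:ℝ) ≤ S + 1 + c), mul_pos (mul_pos hc hsipos) hsipos]
  have hsin2 : si ^ (-(2 : ℝ)) = (si ^ 2)⁻¹ := by
    rw [Real.rpow_neg hsipos.le, show ((2:ℝ)) = ((2:ℕ):ℝ) by norm_num, Real.rpow_natCast]
  have hX : 1 + R ^ 2 - 2 * R * co = S * (1 + c - S) / (c - 1 + S) := by
    rw [hR]; field_simp
    linear_combination (S - 1) * hS2
  have hY : c + R ^ 2 = 2 * c * S / (c - 1 + S) := by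
    rw [hR]; field_simp
    linear_combination -hS2
  have part1 : ((1 + c + S) / 2) * si ^ (-(2 : ℝ)) *
      (1 + R ^ 2 - 2 * R * co) = c + R ^ 2 := by
    rw [hsin2, hX, hY]
    field_simp
    linear_combination -hS2 - 4 * c * hpyth
  refine ⟨part1, ?_⟩
  have hRpos : 0 < R := by rw [hR]; positivity
  have hxpos : 0 < 1 + R ^ 2 - 2 * R * co := by
    rw [hX]; exact div_pos (mul_pos hSpos (by linarith)) hD
  have hKnn : 0 ≤ (1 + c + S) * si ^ (-(2 : ℝ)) :=
    mul_nonneg (by linarith) (Real.rpow_nonneg hsipos.le _)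
  rw [Real.cos_pi_sub, hA]
  rw [show (2 : ℝ) ^ (-(p / 2)) = ((2:ℝ)⁻¹) ^ (p / 2) by
    rw [Real.rpow_neg (by norm_num), ← Real.inv_rpow (by norm_num)]]
  rw [← Real.mul_rpow (by norm_num) hKnn,
    ← Real.mul_rpow (mul_nonneg (by norm_num) hKnn)
      (div_nonneg (by nlinarith) (by linarith))]
  congr 1
  rw [show (2:ℝ)⁻¹ * ((1 + c + S) * si ^ (-(2:ℝ))) *
      ((1 + R ^ 2 + 2 * R * -co) / (2 * R)) =
      (((1 + c + S) / 2) * si ^ (-(2:ℝ)) * (1 + R ^ 2 - 2 * R * co)) / (2 * R) by ring,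
    part1]
end

section
/- Let p ≥ 2 and set q = π/p. Then for every x ∈ [0, π], cos q − cos x + (2/p)·cos(p·x/2)·sin q − (cos(p·x/2))²·(cos q + (2/p)·sin q − 1) ≥ 0. -/
open Real

open Set


/-- chord inequality for sin on [0, π] -/
lemma sin_chord {l y : ℝ} (hl0 : 0 ≤ l) (hl1 : l ≤ 1) (hy0 : 0 ≤ y) (hy : y ≤ π) :
    l * Real.sin y ≤ Real.sin (l * y) := by
  have hπ : (0:ℝ) ∈ Set.Icc (0:ℝ) π := ⟨le_refl _, Real.pi_pos.le⟩
  have hyy : y ∈ Set.Icc (0:ℝ) π := ⟨hy0, hy⟩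
  have h := strictConcaveOn_sin_Icc.concaveOn.2 hπ hyy
    (show (0:ℝ) ≤ 1 - l by linarith) hl0 (show (1 - l) + l = 1 by ring)
  simp only [smul_eq_mul, mul_zero, Real.sin_zero, zero_add] at h
  simpa using h

/-- derivative helper: sin (a θ) -/
lemma hasDerivAt_sin_mul (a t : ℝ) :
    HasDerivAt (fun θ : ℝ => Real.sin (a * θ)) (Real.cos (a * t) * a) t := by
  have h1 : HasDerivAt (fun θ : ℝ => a * θ) a t := by
    simpa using (hasDerivAt_id t).const_mul a
  exact (Real.hasDerivAt_sin (a*t)).comp t h1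

lemma hasDerivAt_cos_mul (a t : ℝ) :
    HasDerivAt (fun θ : ℝ => Real.cos (a * θ)) (-Real.sin (a * t) * a) t := by
  have h1 : HasDerivAt (fun θ : ℝ => a * θ) a t := by
    simpa using (hasDerivAt_id t).const_mul a
  exact (Real.hasDerivAt_cos (a*t)).comp t h1

/-- tangent bound : sin t ≤ (4/π) t cos t on [0, π/4] -/
lemma sin_le_tan_chord {t : ℝ} (ht0 : 0 ≤ t) (ht : t ≤ π/4) :
    Real.sin t ≤ 4/π * t * Real.cos t := by
  set u : ℝ → ℝ := fun t => 4/π * t * Real.cos t - Real.sin t with hu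
  set u' : ℝ → ℝ := fun t => 4/π * Real.cos t - 4/π * t * Real.sin t - Real.cos t with hu'
  set u'' : ℝ → ℝ := fun t => (1 - 8/π) * Real.sin t - 4/π * t * Real.cos t with hu''
  have hdu : ∀ s : ℝ, HasDerivAt u (u' s) s := by
    intro s
    have h1 : HasDerivAt (fun t : ℝ => 4/π * t) (4/π) s := by
      simpa using (hasDerivAt_id s).const_mul (4/π)
    have h2 := h1.mul (Real.hasDerivAt_cos s)
    have h3 := h2.sub (Real.hasDerivAt_sin s)
    refine h3.congr_deriv ?_
    simp [hu']; ring
  have hdu' : ∀ s : ℝ, HasDerivAt u' (u'' s) s := by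
    intro s
    have h1 : HasDerivAt (fun t : ℝ => 4/π * Real.cos t) (4/π * (-Real.sin s)) s :=
      (Real.hasDerivAt_cos s).const_mul (4/π)
    have h2 : HasDerivAt (fun t : ℝ => 4/π * t) (4/π) s := by
      simpa using (hasDerivAt_id s).const_mul (4/π)
    have h3 := h2.mul (Real.hasDerivAt_sin s)
    have h4 := (h1.sub h3).sub (Real.hasDerivAt_cos s)
    refine h4.congr_deriv ?_
    simp [hu'']; ring
  have hconc : ConcaveOn ℝ (Set.Icc 0 (π/4)) u := by
    apply concaveOn_of_hasDerivWithinAt2_nonpos (convex_Icc _ _)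
      (Continuous.continuousOn (by fun_prop))
      (fun s _ => (hdu s).hasDerivWithinAt)
      (fun s _ => (hdu' s).hasDerivWithinAt)
    intro s hs
    rw [interior_Icc] at hs
    obtain ⟨hs0, hs4⟩ := hs
    have hsin : 0 ≤ Real.sin s := Real.sin_nonneg_of_nonneg_of_le_pi hs0.le
      (by nlinarith [Real.pi_pos])
    have hcos : 0 ≤ Real.cos s := Real.cos_nonneg_of_mem_Icc
      ⟨by linarith, by nlinarith [Real.pi_pos]⟩
    have h8 : (1:ℝ) - 8/π ≤ 0 := by
      have := Real.pi_le_four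
      have hπ := Real.pi_pos
      rw [sub_nonpos, le_div_iff₀ hπ]
      linarith
    have : u'' s = (1 - 8/π) * Real.sin s - 4/π * s * Real.cos s := rfl
    rw [this]
    have hπ := Real.pi_pos
    have t1 : (1 - 8/π) * Real.sin s ≤ 0 := mul_nonpos_of_nonpos_of_nonneg h8 hsin
    have t2 : 0 ≤ 4/π * s * Real.cos s := by positivity
    linarith
  -- endpoints zero
  have h0 : u 0 = 0 := by simp [hu]
  have h4 : u (π/4) = 0 := by
    simp [hu, Real.cos_pi_div_four, Real.sin_pi_div_four]
  have hmem : t ∈ Set.Icc 0 (π/4) := ⟨ht0, ht⟩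
  obtain ⟨a, b, ha, hb, hab, habt⟩ := (Convex.mem_Icc (by positivity)).1 hmem
  have := hconc.2 (Set.left_mem_Icc.2 (by positivity)) (Set.right_mem_Icc.2 (by positivity))
    ha hb hab
  simp only [smul_eq_mul] at this
  rw [h0, h4] at this
  have : 0 ≤ u (a * 0 + b * (π/4)) := by simpa using this
  rw [habt] at this
  simp only [hu] at this
  linarith
/-- w-lemma : 2 t (cos t + sin t) ≤ π sin t on [0, π/4] -/
lemma w_lemma {t : ℝ} (ht0 : 0 ≤ t) (ht : t ≤ π/4) :
    2 * t * (Real.cos t + Real.sin t) ≤ π * Real.sin t := by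
  set w : ℝ → ℝ := fun t => π * Real.sin t - 2 * t * Real.cos t - 2 * t * Real.sin t with hw
  set w' : ℝ → ℝ := fun t =>
    π * Real.cos t - 2 * Real.cos t + 2 * t * Real.sin t - 2 * Real.sin t - 2 * t * Real.cos t
    with hw'
  set w'' : ℝ → ℝ := fun t =>
    (4 - π) * Real.sin t + 2 * t * Real.sin t + 2 * t * Real.cos t - 4 * Real.cos t with hw''
  have hid : ∀ s : ℝ, HasDerivAt (fun t : ℝ => 2 * t) 2 s := by
    intro s; simpa using (hasDerivAt_id s).const_mul 2
  have hdw : ∀ s : ℝ, HasDerivAt w (w' s) s := by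
    intro s
    have h1 := (Real.hasDerivAt_sin s).const_mul π
    have h2 := (hid s).mul (Real.hasDerivAt_cos s)
    have h3 := (hid s).mul (Real.hasDerivAt_sin s)
    have h4 := (h1.sub h2).sub h3
    refine h4.congr_deriv ?_
    simp [hw']; ring
  have hdw' : ∀ s : ℝ, HasDerivAt w' (w'' s) s := by
    intro s
    have h1 := (Real.hasDerivAt_cos s).const_mul π
    have h2 := (Real.hasDerivAt_cos s).const_mul 2
    have h3 := (hid s).mul (Real.hasDerivAt_sin s)
    have h4 := (Real.hasDerivAt_sin s).const_mul 2
    have h5 := (hid s).mul (Real.hasDerivAt_cos s)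
    have h6 := (((h1.sub h2).add h3).sub h4).sub h5
    refine h6.congr_deriv ?_
    simp [hw'']; ring
  have hconc : ConcaveOn ℝ (Set.Icc 0 (π/4)) w := by
    apply concaveOn_of_hasDerivWithinAt2_nonpos (convex_Icc _ _)
      (Continuous.continuousOn (by fun_prop))
      (fun s _ => (hdw s).hasDerivWithinAt)
      (fun s _ => (hdw' s).hasDerivWithinAt)
    intro s hs
    rw [interior_Icc] at hs
    obtain ⟨hs0, hs4⟩ := hs
    have hπ := Real.pi_pos
    have hsin : 0 ≤ Real.sin s := Real.sin_nonneg_of_nonneg_of_le_pi hs0.le (by nlinarith)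
    have hcos : 0 ≤ Real.cos s := Real.cos_nonneg_of_mem_Icc ⟨by linarith, by nlinarith⟩
    have htan : Real.sin s ≤ 4/π * s * Real.cos s := sin_le_tan_chord hs0.le hs4.le
    have hp4 : π ≤ 4 := Real.pi_le_four
    -- w'' s = (4-π+2s) sin s + (2s-4) cos s ≤ cos s * ((4s/π)(4-π+2s) + 2s - 4) ≤ 0
    have key1 : (4 - π + 2*s) * Real.sin s ≤ (4 - π + 2*s) * (4/π * s * Real.cos s) := by
      apply mul_le_mul_of_nonneg_left htan; nlinarith
    have key2 : (4 - π + 2*s) * (4/π * s * Real.cos s) + (2*s - 4) * Real.cos s ≤ 0 := by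
      have hfact : (4 - π + 2*s) * (4/π * s) + (2*s - 4) = (s - π/4) * (8/π * s + 16/π) := by
        field_simp; ring
      have h1 : (s - π/4) * (8/π * s + 16/π) ≤ 0 := by
        apply mul_nonpos_of_nonpos_of_nonneg
        · linarith
        · positivity
      calc (4 - π + 2*s) * (4/π * s * Real.cos s) + (2*s - 4) * Real.cos s
          = ((4 - π + 2*s) * (4/π * s) + (2*s - 4)) * Real.cos s := by ring
        _ = (s - π/4) * (8/π * s + 16/π) * Real.cos s := by rw [hfact]
        _ ≤ 0 := mul_nonpos_of_nonpos_of_nonneg h1 hcos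
    have : w'' s = (4 - π + 2*s) * Real.sin s + (2*s - 4) * Real.cos s := by
      simp [hw'']; ring
    rw [this]
    linarith [key1, key2]
  have h0 : w 0 = 0 := by simp [hw]
  have h4 : w (π/4) = 0 := by
    simp [hw, Real.cos_pi_div_four, Real.sin_pi_div_four]
    ring
  have hmem : t ∈ Set.Icc 0 (π/4) := ⟨ht0, ht⟩
  obtain ⟨a, b, ha, hb, hab, habt⟩ := (Convex.mem_Icc (by positivity)).1 hmem
  have hcc := hconc.2 (Set.left_mem_Icc.2 (by positivity)) (Set.right_mem_Icc.2 (by positivity))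
    ha hb hab
  simp only [smul_eq_mul] at hcc
  rw [h0, h4] at hcc
  have h5 : 0 ≤ w (a * 0 + b * (π/4)) := by simpa using hcc
  rw [habt] at h5
  simp only [hw] at h5
  linarith
/-- K ≥ 0 : cos q + (2q/π) sin q ≥ 1 on [0, π/2] -/
lemma K_nonneg {q : ℝ} (hq0 : 0 ≤ q) (hq2 : q ≤ π/2) :
    0 ≤ Real.cos q + 2*q/π * Real.sin q - 1 := by
  have hπ := Real.pi_pos
  have ht0 : 0 ≤ q/2 := by linarith
  have ht4 : q/2 ≤ π/4 := by linarith
  have htan := sin_le_tan_chord ht0 ht4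
  have hsin : 0 ≤ Real.sin (q/2) := Real.sin_nonneg_of_nonneg_of_le_pi ht0 (by linarith)
  have hcosq : Real.cos q = 1 - 2 * Real.sin (q/2)^2 := by
    have h := Real.cos_two_mul (q/2)
    rw [show 2*(q/2) = q by ring] at h
    nlinarith [Real.sin_sq_add_cos_sq (q/2)]
  have hsinq : Real.sin q = 2 * Real.sin (q/2) * Real.cos (q/2) := by
    have h := Real.sin_two_mul (q/2)
    rw [show 2*(q/2) = q by ring] at h
    linarith
  have h3 : Real.sin (q/2) ≤ 2*q/π * Real.cos (q/2) := by
    rw [show 2*q/π = 4/π * (q/2) by ring]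
    exact htan
  rw [hcosq, hsinq]
  nlinarith [mul_nonneg hsin (sub_nonneg.2 h3)]

/-- L3 : 2K ≤ (2q/π)² cos q on [0, π/2] -/
lemma L3_ineq {q : ℝ} (hq0 : 0 ≤ q) (hq2 : q ≤ π/2) :
    2 * (Real.cos q + 2*q/π * Real.sin q - 1) ≤ (2*q/π)^2 * Real.cos q := by
  have hπ := Real.pi_pos
  have ht0 : 0 ≤ q/2 := by linarith
  have ht4 : q/2 ≤ π/4 := by linarith
  have hw := w_lemma ht0 ht4
  set s := Real.sin (q/2)
  set c := Real.cos (q/2)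
  have hs0 : 0 ≤ s := Real.sin_nonneg_of_nonneg_of_le_pi ht0 (by linarith)
  have hc0 : 0 ≤ c := Real.cos_nonneg_of_mem_Icc ⟨by linarith, by linarith⟩
  have hpy : s^2 + c^2 = 1 := Real.sin_sq_add_cos_sq (q/2)
  have hcosq : Real.cos q = c^2 - s^2 := by
    have h := Real.cos_two_mul (q/2)
    rw [show 2*(q/2) = q by ring] at h
    nlinarith [Real.sin_sq_add_cos_sq (q/2)]
  have hsinq : Real.sin q = 2 * s * c := by
    have h := Real.sin_two_mul (q/2)
    rw [show 2*(q/2) = q by ring] at h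
    linarith
  -- w_lemma : 2*(q/2)*(c+s) ≤ π*s , i.e. q*(c+s) ≤ π*s , so (2q/π)(c+s) ≤ 2s
  have hf1 : 2*q/π * (c + s) - 2*s ≤ 0 := by
    have : q * (c + s) ≤ π * s := by linarith [hw]
    rw [div_mul_eq_mul_div, sub_nonpos, div_le_iff₀ hπ]
    nlinarith
  have hf2 : 2*q/π * (c - s) - 2*s ≤ 0 := by
    have hq' : 0 ≤ 2*q/π * s := by positivity
    nlinarith [hf1]
  have hprod : 0 ≤ (2*q/π * (c + s) - 2*s) * (2*q/π * (c - s) - 2*s) := by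
    nlinarith [hf1, hf2]
  rw [hcosq, hsinq]
  nlinarith [hprod]

/-- L5 : α²(1 - cos s) ≤ 1 - cos (α s) for α ∈ [0,1], s ∈ [0,π] -/
lemma one_sub_cos_bound {a s : ℝ} (ha0 : 0 ≤ a) (ha1 : a ≤ 1) (hs0 : 0 ≤ s) (hs : s ≤ π) :
    a^2 * (1 - Real.cos s) ≤ 1 - Real.cos (a*s) := by
  have hchord := sin_chord ha0 ha1 (by linarith : (0:ℝ) ≤ s/2) (by linarith : s/2 ≤ π)
  have hs2 : 0 ≤ Real.sin (s/2) := Real.sin_nonneg_of_nonneg_of_le_pi (by linarith) (by linarith)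
  have has2 : 0 ≤ a * Real.sin (s/2) := mul_nonneg ha0 hs2
  have hsq : (a * Real.sin (s/2))^2 ≤ Real.sin (a*(s/2))^2 := by
    apply sq_le_sq' _ hchord
    nlinarith [Real.neg_one_le_sin (a*(s/2)), Real.sin_le_one (a*(s/2)), hchord]
  have hcs : Real.cos s = 1 - 2 * Real.sin (s/2)^2 := by
    have h := Real.cos_two_mul (s/2)
    rw [show 2*(s/2) = s by ring] at h
    nlinarith [Real.sin_sq_add_cos_sq (s/2)]
  have hcas : Real.cos (a*s) = 1 - 2 * Real.sin (a*(s/2))^2 := by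
    have h2 : a*s = 2*(a*(s/2)) := by ring
    rw [h2, Real.cos_two_mul]
    nlinarith [Real.sin_sq_add_cos_sq (a*(s/2))]
  rw [hcs, hcas]
  nlinarith [hsq]
/-- numerator positivity for the ratio sin(αθ)/sin θ -/
lemma ratio_num_nonneg {a θ : ℝ} (ha0 : 0 ≤ a) (ha1 : a ≤ 1) (hθ0 : 0 ≤ θ) (hθ : θ ≤ π/2) :
    0 ≤ Real.cos (a*θ) * a * Real.sin θ - Real.sin (a*θ) * Real.cos θ := by
  have hπ := Real.pi_pos
  have h1a : (0:ℝ) < 1 + a := by linarith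
  have hl0 : 0 ≤ (1-a)/(1+a) := div_nonneg (by linarith) h1a.le
  have hl1 : (1-a)/(1+a) ≤ 1 := by
    rw [div_le_one h1a]; linarith
  have hy0 : 0 ≤ (1+a)*θ := by positivity
  have hy : (1+a)*θ ≤ π := by nlinarith
  have hchord := sin_chord hl0 hl1 hy0 hy
  have hly : (1-a)/(1+a) * ((1+a)*θ) = (1-a)*θ := by
    field_simp
  rw [hly] at hchord
  have hmul : (1-a) * Real.sin ((1+a)*θ) ≤ (1+a) * Real.sin ((1-a)*θ) := by
    have := mul_le_mul_of_nonneg_left hchord h1a.le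
    calc (1-a) * Real.sin ((1+a)*θ)
        = (1+a) * ((1-a)/(1+a) * Real.sin ((1+a)*θ)) := by field_simp
      _ ≤ (1+a) * Real.sin ((1-a)*θ) := this
  have hid : Real.cos (a*θ) * a * Real.sin θ - Real.sin (a*θ) * Real.cos θ
      = ((1+a) * Real.sin ((1-a)*θ) - (1-a) * Real.sin ((1+a)*θ)) / 2 := by
    rw [show (1-a)*θ = θ - a*θ by ring, show (1+a)*θ = θ + a*θ by ring,
      Real.sin_sub, Real.sin_add]
    ring
  rw [hid]
  linarith

/-- monotonicity of sin(aθ)/sin θ, in product form -/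
lemma Rprod {a θ₁ θ₂ : ℝ} (ha0 : 0 ≤ a) (ha1 : a ≤ 1)
    (h1 : 0 ≤ θ₁) (h12 : θ₁ ≤ θ₂) (h2 : θ₂ ≤ π/2) :
    Real.sin (a*θ₁) * Real.sin θ₂ ≤ Real.sin (a*θ₂) * Real.sin θ₁ := by
  have hπ := Real.pi_pos
  rcases eq_or_lt_of_le h1 with h1' | h1'
  · rw [← h1']
    simp
  rcases eq_or_lt_of_le h12 with h12' | h12'
  · rw [h12']
  -- now 0 < θ₁ < θ₂ ≤ π/2
  have hsin : ∀ θ : ℝ, θ ∈ Set.Icc θ₁ θ₂ → 0 < Real.sin θ := by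
    intro θ ⟨hθ1, hθ2⟩
    exact Real.sin_pos_of_pos_of_lt_pi (lt_of_lt_of_le h1' hθ1) (by linarith)
  set R : ℝ → ℝ := fun θ => Real.sin (a*θ) / Real.sin θ with hR
  have hmono : MonotoneOn R (Set.Icc θ₁ θ₂) := by
    apply monotoneOn_of_hasDerivWithinAt_nonneg (convex_Icc _ _)
      (f' := fun θ => (Real.cos (a*θ) * a * Real.sin θ - Real.sin (a*θ) * Real.cos θ)
        / (Real.sin θ)^2)
    · apply ContinuousOn.div (by fun_prop) (by fun_prop)
      intro θ hθ; exact ne_of_gt (hsin θ hθ)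
    · intro θ hθ
      rw [interior_Icc] at hθ
      have hne : Real.sin θ ≠ 0 := ne_of_gt (hsin θ (Set.mem_Icc.2 ⟨hθ.1.le, hθ.2.le⟩))
      exact ((hasDerivAt_sin_mul a θ).div (Real.hasDerivAt_sin θ) hne).hasDerivWithinAt
    · intro θ hθ
      rw [interior_Icc] at hθ
      have h0θ : 0 ≤ θ := le_trans h1 hθ.1.le
      have hθπ : θ ≤ π/2 := le_trans hθ.2.le h2
      have hnum := ratio_num_nonneg ha0 ha1 h0θ hθπ
      positivity
  have hle := hmono (Set.left_mem_Icc.2 h12) (Set.right_mem_Icc.2 h12) h12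
  simp only [hR] at hle
  rw [div_le_div_iff₀ (hsin θ₁ (Set.left_mem_Icc.2 h12)) (hsin θ₂ (Set.right_mem_Icc.2 h12))]
    at hle
  exact hle
set_option maxHeartbeats 1000000 in
/-- N ≥ 0 on [0,π/2] : the core ratio-monotonicity certificate. -/
lemma N_nonneg {a : ℝ} (ha0 : 0 ≤ a) (ha1 : a ≤ 1) {θs : ℝ} (hθ0 : 0 ≤ θs) (hθ2 : θs ≤ π/2) :
    0 ≤ (Real.sin (a*(π/2)) * Real.cos θs - Real.cos (a*θs) * a) * (2 * Real.sin θs * Real.cos θs)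
      - (Real.sin (a*(π/2)) * Real.sin θs - Real.sin (a*θs))
        * (2 * (Real.cos θs * Real.cos θs - Real.sin θs * Real.sin θs)) := by
  have hπ := Real.pi_pos
  set S := Real.sin (a*(π/2)) with hS
  have hS0 : 0 ≤ S := Real.sin_nonneg_of_nonneg_of_le_pi (by positivity) (by nlinarith)
  set N : ℝ → ℝ := fun θ =>
    (S * Real.cos θ - Real.cos (a*θ) * a) * (2 * Real.sin θ * Real.cos θ)
      - (S * Real.sin θ - Real.sin (a*θ))
        * (2 * (Real.cos θ * Real.cos θ - Real.sin θ * Real.sin θ)) with hN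
  suffices main : 0 ≤ N θs by simpa [hN] using main
  have hdN : ∀ θ : ℝ, HasDerivAt N
      ((2 * Real.sin θ * Real.cos θ) * (3*S*Real.sin θ - (4 - a^2) * Real.sin (a*θ))) θ := by
    intro θ
    have hm' : HasDerivAt (fun θ : ℝ => S * Real.cos θ - Real.cos (a*θ) * a)
        (S * (-Real.sin θ) - (-Real.sin (a*θ) * a) * a) θ :=
      ((Real.hasDerivAt_cos θ).const_mul S).sub ((hasDerivAt_cos_mul a θ).mul_const a)
    have hg : HasDerivAt (fun θ : ℝ => 2 * Real.sin θ * Real.cos θ)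
        (2 * Real.cos θ * Real.cos θ + 2 * Real.sin θ * (-Real.sin θ)) θ :=
      ((Real.hasDerivAt_sin θ).const_mul 2).mul (Real.hasDerivAt_cos θ)
    have hm : HasDerivAt (fun θ : ℝ => S * Real.sin θ - Real.sin (a*θ))
        (S * Real.cos θ - Real.cos (a*θ) * a) θ :=
      ((Real.hasDerivAt_sin θ).const_mul S).sub (hasDerivAt_sin_mul a θ)
    have hg' : HasDerivAt (fun θ : ℝ => 2 * (Real.cos θ * Real.cos θ - Real.sin θ * Real.sin θ))
        (2 * ((-Real.sin θ) * Real.cos θ + Real.cos θ * (-Real.sin θ)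
          - (Real.cos θ * Real.sin θ + Real.sin θ * Real.cos θ))) θ :=
      (((Real.hasDerivAt_cos θ).mul (Real.hasDerivAt_cos θ)).sub
        ((Real.hasDerivAt_sin θ).mul (Real.hasDerivAt_sin θ))).const_mul 2
    have h := (hm'.mul hg).sub (hm.mul hg')
    refine h.congr_deriv ?_
    ring
  have hN0 : N 0 = 0 := by simp [hN]
  have hNpi : N (π/2) = 0 := by
    simp [hN, hS, Real.sin_pi_div_two, Real.cos_pi_div_two]
  by_cases hk : 0 ≤ 3*S*Real.sin θs - (4 - a^2) * Real.sin (a*θs)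
  · rcases eq_or_lt_of_le hθ0 with h0' | h0'
    · rw [← h0', hN0]
    have hsθs : 0 < Real.sin θs := Real.sin_pos_of_pos_of_lt_pi h0' (by linarith)
    have hmono : MonotoneOn N (Set.Icc 0 θs) := by
      apply monotoneOn_of_hasDerivWithinAt_nonneg (convex_Icc _ _)
        (Continuous.continuousOn (by fun_prop))
        (fun θ _ => (hdN θ).hasDerivWithinAt)
      intro θ hθ
      rw [interior_Icc] at hθ
      obtain ⟨hθa, hθb⟩ := hθ
      have hθpi : θ < π/2 := lt_of_lt_of_le hθb hθ2
      have hsθ : 0 ≤ Real.sin θ := Real.sin_nonneg_of_nonneg_of_le_pi hθa.le (by linarith)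
      have hcθ : 0 ≤ Real.cos θ := Real.cos_nonneg_of_mem_Icc ⟨by linarith, hθpi.le⟩
      have hrp := Rprod ha0 ha1 hθa.le hθb.le hθ2
      have h4a : (0:ℝ) ≤ 4 - a^2 := by nlinarith
      have hkθ : 0 ≤ 3*S*Real.sin θ - (4 - a^2) * Real.sin (a*θ) := by
        have h1 : (4 - a^2) * (Real.sin (a*θ) * Real.sin θs)
            ≤ (4 - a^2) * (Real.sin (a*θs) * Real.sin θ) := mul_le_mul_of_nonneg_left hrp h4a
        have h2 : ((4 - a^2) * Real.sin (a*θs)) * Real.sin θ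
            ≤ (3*S*Real.sin θs) * Real.sin θ := mul_le_mul_of_nonneg_right (by linarith) hsθ
        have h3 : ((4 - a^2) * Real.sin (a*θ)) * Real.sin θs
            ≤ (3*S*Real.sin θ) * Real.sin θs := by linarith [h1, h2]
        linarith [le_of_mul_le_mul_right h3 hsθs]
      have hgθ : 0 ≤ 2 * Real.sin θ * Real.cos θ := by positivity
      exact mul_nonneg hgθ hkθ
    have h := hmono (Set.left_mem_Icc.2 hθ0) (Set.right_mem_Icc.2 hθ0) hθ0
    rw [hN0] at h
    exact h
  · push_neg at hk
    have h0' : 0 < θs := by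
      rcases eq_or_lt_of_le hθ0 with h0' | h0'
      · exfalso; rw [← h0'] at hk; simp at hk
      · exact h0'
    have hsθs : 0 < Real.sin θs := Real.sin_pos_of_pos_of_lt_pi h0' (by linarith)
    have hanti : AntitoneOn N (Set.Icc θs (π/2)) := by
      apply antitoneOn_of_hasDerivWithinAt_nonpos (convex_Icc _ _)
        (Continuous.continuousOn (by fun_prop))
        (fun θ _ => (hdN θ).hasDerivWithinAt)
      intro θ hθ
      rw [interior_Icc] at hθ
      obtain ⟨hθa, hθb⟩ := hθ
      have hθ0' : 0 < θ := lt_trans h0' hθa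
      have hsθ : 0 ≤ Real.sin θ := Real.sin_nonneg_of_nonneg_of_le_pi hθ0'.le (by linarith)
      have hcθ : 0 ≤ Real.cos θ := Real.cos_nonneg_of_mem_Icc ⟨by linarith, hθb.le⟩
      have hrp := Rprod ha0 ha1 h0'.le hθa.le hθb.le
      have h4a : (0:ℝ) ≤ 4 - a^2 := by nlinarith
      have hkθ : 3*S*Real.sin θ - (4 - a^2) * Real.sin (a*θ) ≤ 0 := by
        have h1 : (3*S*Real.sin θs) * Real.sin θ ≤ ((4 - a^2) * Real.sin (a*θs)) * Real.sin θ :=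
          mul_le_mul_of_nonneg_right (by linarith) hsθ
        have h2 : (4 - a^2) * (Real.sin (a*θs) * Real.sin θ)
            ≤ (4 - a^2) * (Real.sin (a*θ) * Real.sin θs) := mul_le_mul_of_nonneg_left hrp h4a
        have h3 : (3*S*Real.sin θ) * Real.sin θs
            ≤ ((4 - a^2) * Real.sin (a*θ)) * Real.sin θs := by linarith [h1, h2]
        linarith [le_of_mul_le_mul_right h3 hsθs]
      have hgθ : 0 ≤ 2 * Real.sin θ * Real.cos θ := by positivity
      exact mul_nonpos_of_nonneg_of_nonpos hgθ hkθ
    have h := hanti (Set.left_mem_Icc.2 hθ2) (Set.right_mem_Icc.2 hθ2) hθ2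
    rw [hNpi] at h
    exact h
set_option maxHeartbeats 1000000 in
/-- monotonicity of (S sin θ - sin (aθ)) / sin 2θ in product form -/
lemma Mprod {a θ₁ θ₂ : ℝ} (ha0 : 0 ≤ a) (ha1 : a ≤ 1)
    (h1 : 0 < θ₁) (h12 : θ₁ ≤ θ₂) (h2 : θ₂ < π/2) :
    (Real.sin (a*(π/2)) * Real.sin θ₁ - Real.sin (a*θ₁)) * (2 * Real.sin θ₂ * Real.cos θ₂)
      ≤ (Real.sin (a*(π/2)) * Real.sin θ₂ - Real.sin (a*θ₂)) * (2 * Real.sin θ₁ * Real.cos θ₁) := by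
  have hπ := Real.pi_pos
  set S := Real.sin (a*(π/2)) with hS
  have hgpos : ∀ θ : ℝ, θ ∈ Set.Icc θ₁ θ₂ → 0 < 2 * Real.sin θ * Real.cos θ := by
    intro θ ⟨ha', hb'⟩
    have h0θ : 0 < θ := lt_of_lt_of_le h1 ha'
    have hθ2 : θ < π/2 := lt_of_le_of_lt hb' h2
    have hs : 0 < Real.sin θ := Real.sin_pos_of_pos_of_lt_pi h0θ (by linarith)
    have hc : 0 < Real.cos θ := Real.cos_pos_of_mem_Ioo ⟨by linarith, hθ2⟩
    positivity
  set M : ℝ → ℝ := fun θ =>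
    (S * Real.sin θ - Real.sin (a*θ)) / (2 * Real.sin θ * Real.cos θ) with hM
  have hmono : MonotoneOn M (Set.Icc θ₁ θ₂) := by
    apply monotoneOn_of_hasDerivWithinAt_nonneg (convex_Icc _ _)
      (f' := fun θ => ((S * Real.cos θ - Real.cos (a*θ) * a) * (2 * Real.sin θ * Real.cos θ)
        - (S * Real.sin θ - Real.sin (a*θ))
          * (2 * Real.cos θ * Real.cos θ + 2 * Real.sin θ * (-Real.sin θ)))
        / (2 * Real.sin θ * Real.cos θ)^2)
    · apply ContinuousOn.div (by fun_prop) (by fun_prop)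
      intro θ hθ; exact ne_of_gt (hgpos θ hθ)
    · intro θ hθ
      rw [interior_Icc] at hθ
      have hne : 2 * Real.sin θ * Real.cos θ ≠ 0 :=
        ne_of_gt (hgpos θ (Set.mem_Icc.2 ⟨hθ.1.le, hθ.2.le⟩))
      have hm : HasDerivAt (fun θ : ℝ => S * Real.sin θ - Real.sin (a*θ))
          (S * Real.cos θ - Real.cos (a*θ) * a) θ :=
        ((Real.hasDerivAt_sin θ).const_mul S).sub (hasDerivAt_sin_mul a θ)
      have hg : HasDerivAt (fun θ : ℝ => 2 * Real.sin θ * Real.cos θ)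
          (2 * Real.cos θ * Real.cos θ + 2 * Real.sin θ * (-Real.sin θ)) θ :=
        ((Real.hasDerivAt_sin θ).const_mul 2).mul (Real.hasDerivAt_cos θ)
      exact (hm.div hg hne).hasDerivWithinAt
    · intro θ hθ
      rw [interior_Icc] at hθ
      have h0θ : 0 ≤ θ := (lt_of_lt_of_le h1 hθ.1.le).le
      have hθ2 : θ ≤ π/2 := (lt_of_le_of_lt hθ.2.le h2).le
      have hnum := N_nonneg ha0 ha1 h0θ hθ2
      rw [← hS] at hnum
      have : ((S * Real.cos θ - Real.cos (a*θ) * a) * (2 * Real.sin θ * Real.cos θ)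
          - (S * Real.sin θ - Real.sin (a*θ))
            * (2 * Real.cos θ * Real.cos θ + 2 * Real.sin θ * (-Real.sin θ)))
          = (S * Real.cos θ - Real.cos (a*θ) * a) * (2 * Real.sin θ * Real.cos θ)
          - (S * Real.sin θ - Real.sin (a*θ))
            * (2 * (Real.cos θ * Real.cos θ - Real.sin θ * Real.sin θ)) := by ring
      rw [this]
      positivity
  have hle := hmono (Set.left_mem_Icc.2 h12) (Set.right_mem_Icc.2 h12) h12
  simp only [hM] at hle
  rw [div_le_div_iff₀ (hgpos θ₁ (Set.left_mem_Icc.2 h12)) (hgpos θ₂ (Set.right_mem_Icc.2 h12))]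
    at hle
  exact hle
set_option maxHeartbeats 1000000 in
/-- Case III : the inequality for θ₀ ∈ [0, π/2] (i.e. x ∈ [0,q]). -/
lemma caseIII {a θ₀ : ℝ} (ha0 : 0 < a) (ha1 : a ≤ 1) (hθ0 : 0 ≤ θ₀) (hθ2 : θ₀ ≤ π/2) :
    0 ≤ Real.cos (a*(π/2)) - Real.cos (a*θ₀) + a * Real.sin (a*(π/2)) * Real.cos θ₀
      - (Real.cos (a*(π/2)) + a * Real.sin (a*(π/2)) - 1) * Real.cos θ₀^2 := by
  have hπ := Real.pi_pos
  set S := Real.sin (a*(π/2)) with hS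
  set A := Real.cos (a*(π/2)) with hA
  set K := A + a * S - 1 with hK
  set G : ℝ → ℝ := fun θ =>
    A - Real.cos (a*θ) + a * S * Real.cos θ - K * Real.cos θ^2 with hG
  suffices main : 0 ≤ G θ₀ by simpa [hG] using main
  have hdG : ∀ θ : ℝ, HasDerivAt G
      (Real.sin (a*θ) * a - a * S * Real.sin θ + K * (2 * Real.sin θ * Real.cos θ)) θ := by
    intro θ
    have h1 : HasDerivAt (fun θ : ℝ => A - Real.cos (a*θ)) (0 - -Real.sin (a*θ) * a) θ :=
      (hasDerivAt_const θ A).sub (hasDerivAt_cos_mul a θ)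
    have h2 : HasDerivAt (fun θ : ℝ => a * S * Real.cos θ) (a * S * (-Real.sin θ)) θ :=
      (Real.hasDerivAt_cos θ).const_mul (a*S)
    have h3 : HasDerivAt (fun θ : ℝ => K * Real.cos θ^2) (K * (2 * Real.cos θ * (-Real.sin θ))) θ := by
      have := ((Real.hasDerivAt_cos θ).pow 2).const_mul K
      refine this.congr_deriv ?_
      ring
    have h := (h1.add h2).sub h3
    refine h.congr_deriv ?_
    ring
  have hG0 : G 0 = 0 := by simp [hG, hK]; ring
  have hGpi : G (π/2) = 0 := by simp [hG, hA, Real.cos_pi_div_two]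
  rcases eq_or_lt_of_le hθ0 with h0 | h0
  · rw [← h0, hG0]
  rcases eq_or_lt_of_le hθ2 with h2 | h2
  · rw [h2, hGpi]
  -- θ₀ ∈ (0, π/2)
  have hsθ₀ : 0 < Real.sin θ₀ := Real.sin_pos_of_pos_of_lt_pi h0 (by linarith)
  have hcθ₀ : 0 < Real.cos θ₀ := Real.cos_pos_of_mem_Ioo ⟨by linarith, h2⟩
  have hgθ₀ : 0 < 2 * Real.sin θ₀ * Real.cos θ₀ := by positivity
  by_cases hD : a * (S * Real.sin θ₀ - Real.sin (a*θ₀)) ≤ K * (2 * Real.sin θ₀ * Real.cos θ₀)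
  · -- G monotone on [0, θ₀]
    have hmono : MonotoneOn G (Set.Icc 0 θ₀) := by
      apply monotoneOn_of_hasDerivWithinAt_nonneg (convex_Icc _ _)
        (Continuous.continuousOn (by fun_prop))
        (fun θ _ => (hdG θ).hasDerivWithinAt)
      intro θ hθ
      rw [interior_Icc] at hθ
      obtain ⟨hθa, hθb⟩ := hθ
      have hmp := Mprod ha0.le ha1 hθa (le_of_lt hθb) h2
      rw [← hS] at hmp
      have hgθ : 0 < 2 * Real.sin θ * Real.cos θ := by
        have hs : 0 < Real.sin θ := Real.sin_pos_of_pos_of_lt_pi hθa (by nlinarith)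
        have hc : 0 < Real.cos θ := Real.cos_pos_of_mem_Ioo ⟨by linarith, by linarith⟩
        positivity
      -- a*(S sinθ - sin aθ) ≤ K * gθ
      have step1 : a * ((S * Real.sin θ - Real.sin (a*θ)) * (2 * Real.sin θ₀ * Real.cos θ₀))
          ≤ a * ((S * Real.sin θ₀ - Real.sin (a*θ₀)) * (2 * Real.sin θ * Real.cos θ)) :=
        mul_le_mul_of_nonneg_left hmp ha0.le
      have step2 : (a * (S * Real.sin θ₀ - Real.sin (a*θ₀))) * (2 * Real.sin θ * Real.cos θ)
          ≤ (K * (2 * Real.sin θ₀ * Real.cos θ₀)) * (2 * Real.sin θ * Real.cos θ) :=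
        mul_le_mul_of_nonneg_right hD hgθ.le
      have step3 : (a * (S * Real.sin θ - Real.sin (a*θ))) * (2 * Real.sin θ₀ * Real.cos θ₀)
          ≤ (K * (2 * Real.sin θ * Real.cos θ)) * (2 * Real.sin θ₀ * Real.cos θ₀) := by
        nlinarith [step1, step2]
      have step4 := le_of_mul_le_mul_right step3 hgθ₀
      linarith [step4]
    have h := hmono (Set.left_mem_Icc.2 hθ0) (Set.right_mem_Icc.2 hθ0) hθ0
    rw [hG0] at h
    exact h
  · push_neg at hD
    have hanti : AntitoneOn G (Set.Icc θ₀ (π/2)) := by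
      apply antitoneOn_of_hasDerivWithinAt_nonpos (convex_Icc _ _)
        (Continuous.continuousOn (by fun_prop))
        (fun θ _ => (hdG θ).hasDerivWithinAt)
      intro θ hθ
      rw [interior_Icc] at hθ
      obtain ⟨hθa, hθb⟩ := hθ
      have hmp := Mprod ha0.le ha1 h0 (le_of_lt hθa) hθb
      rw [← hS] at hmp
      have hgθ : 0 < 2 * Real.sin θ * Real.cos θ := by
        have hs : 0 < Real.sin θ := Real.sin_pos_of_pos_of_lt_pi (by linarith) (by nlinarith)
        have hc : 0 < Real.cos θ := Real.cos_pos_of_mem_Ioo ⟨by linarith, hθb⟩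
        positivity
      have step1 : a * ((S * Real.sin θ₀ - Real.sin (a*θ₀)) * (2 * Real.sin θ * Real.cos θ))
          ≤ a * ((S * Real.sin θ - Real.sin (a*θ)) * (2 * Real.sin θ₀ * Real.cos θ₀)) :=
        mul_le_mul_of_nonneg_left hmp ha0.le
      have step2 : (K * (2 * Real.sin θ₀ * Real.cos θ₀)) * (2 * Real.sin θ * Real.cos θ)
          ≤ (a * (S * Real.sin θ₀ - Real.sin (a*θ₀))) * (2 * Real.sin θ * Real.cos θ) :=
        mul_le_mul_of_nonneg_right hD.le hgθ.le
      have step3 : (K * (2 * Real.sin θ * Real.cos θ)) * (2 * Real.sin θ₀ * Real.cos θ₀)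
          ≤ (a * (S * Real.sin θ - Real.sin (a*θ))) * (2 * Real.sin θ₀ * Real.cos θ₀) := by
        nlinarith [step1, step2]
      have step4 := le_of_mul_le_mul_right step3 hgθ₀
      linarith [step4]
    have h := hanti (Set.left_mem_Icc.2 hθ2) (Set.right_mem_Icc.2 hθ2) hθ2
    rw [hGpi] at h
    exact h
set_option maxHeartbeats 1000000 in
/-- Lemma 3.1 of the paper: a key scalar inequality, with `q = π/p`. -/
theorem key_scalar_inequality (p : ℝ) (hp : 2 ≤ p)
    (q : ℝ) (hq : q = π / p)
    (x : ℝ) (hx : x ∈ Set.Icc (0 : ℝ) π) :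
    Real.cos q - Real.cos x + (2 / p) * Real.cos (p * x / 2) * Real.sin q -
      (Real.cos (p * x / 2)) ^ 2 * (Real.cos q + (2 / p) * Real.sin q - 1) ≥ 0 := by
  obtain ⟨hx0, hxπ⟩ := hx
  have hπ := Real.pi_pos
  have hp0 : (0:ℝ) < p := by linarith
  have hq0 : 0 < q := by rw [hq]; positivity
  have hq2 : q ≤ π/2 := by
    rw [hq]
    exact div_le_div_of_nonneg_left hπ.le two_pos hp
  have ha0 : (0:ℝ) < 2/p := by positivity
  have ha1 : 2/p ≤ 1 := by rw [div_le_one hp0]; linarith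
  have haq : (2/p) * (π/2) = q := by rw [hq]; field_simp
  have h2p : 2/p = 2*q/π := by rw [hq]; field_simp
  have hA0 : 0 ≤ Real.cos q := Real.cos_nonneg_of_mem_Icc ⟨by linarith, hq2⟩
  have hS0 : 0 ≤ Real.sin q := Real.sin_nonneg_of_nonneg_of_le_pi hq0.le (by linarith)
  have hK : 0 ≤ Real.cos q + 2/p * Real.sin q - 1 := by
    rw [h2p]; exact K_nonneg hq0.le hq2
  rw [ge_iff_le]
  rcases le_or_gt x q with hxq | hxq
  · -- Case III : x ∈ [0, q]
    have hθ0 : 0 ≤ p*x/2 := by positivity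
    have hθ2 : p*x/2 ≤ π/2 := by
      have : p*x ≤ p*q := mul_le_mul_of_nonneg_left hxq hp0.le
      have hpq : p*q = π := by rw [hq]; field_simp
      linarith
    have h := caseIII (a := 2/p) (θ₀ := p*x/2) ha0 ha1 hθ0 hθ2
    rw [haq, show (2/p)*(p*x/2) = x by field_simp] at h
    nlinarith [h]
  rcases le_or_gt x (2*q) with hx2q | hx2q
  · -- Case II : x ∈ [q, 2q]
    set s := p*(x-q)/2 with hs
    have hs0 : 0 ≤ s := by
      rw [hs]
      have : 0 ≤ x - q := by linarith
      positivity
    have hs2 : s ≤ π/2 := by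
      have : p*(x-q) ≤ p*q := mul_le_mul_of_nonneg_left (by linarith) hp0.le
      have hpq : p*q = π := by rw [hq]; field_simp
      rw [hs]; linarith
    have hpx : p*x/2 = π/2 + s := by
      have hpq : p*q = π := by rw [hq]; field_simp
      rw [hs]; linarith
    have hc : Real.cos (p*x/2) = -Real.sin s := by
      rw [hpx, Real.cos_add]; simp
    have hxs : x = q + (2/p)*s := by rw [hs]; field_simp; ring
    have hcx : Real.cos x = Real.cos q * Real.cos ((2/p)*s) - Real.sin q * Real.sin ((2/p)*s) := by
      rw [hxs, Real.cos_add]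
    have hL4 : (2/p) * Real.sin s ≤ Real.sin ((2/p)*s) :=
      sin_chord ha0.le ha1 hs0 (by linarith)
    have hL5 : (2/p)^2 * (1 - Real.cos s) ≤ 1 - Real.cos ((2/p)*s) :=
      one_sub_cos_bound ha0.le ha1 hs0 (by linarith)
    have hL3 : 2 * (Real.cos q + 2/p * Real.sin q - 1) ≤ (2/p)^2 * Real.cos q := by
      rw [h2p]; exact L3_ineq hq0.le hq2
    have hss : 0 ≤ Real.sin s := Real.sin_nonneg_of_nonneg_of_le_pi hs0 (by linarith)
    have hcs0 : 0 ≤ Real.cos s := Real.cos_nonneg_of_mem_Icc ⟨by linarith, hs2⟩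
    have hcs1 : Real.cos s ≤ 1 := Real.cos_le_one s
    have hpy : Real.sin s^2 + Real.cos s^2 = 1 := Real.sin_sq_add_cos_sq s
    rw [hc, hcx]
    have t1 : 0 ≤ Real.sin q * (Real.sin ((2/p)*s) - (2/p) * Real.sin s) :=
      mul_nonneg hS0 (by linarith)
    have t2 : Real.cos q * ((2/p)^2 * (1 - Real.cos s))
        ≤ Real.cos q * (1 - Real.cos ((2/p)*s)) := mul_le_mul_of_nonneg_left hL5 hA0
    have t3 : 2 * (Real.cos q + 2/p * Real.sin q - 1) * (1 - Real.cos s)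
        ≤ (2/p)^2 * Real.cos q * (1 - Real.cos s) :=
      mul_le_mul_of_nonneg_right hL3 (by linarith)
    have t4 : 0 ≤ (Real.cos q + 2/p * Real.sin q - 1) * (1 - Real.cos s)^2 :=
      mul_nonneg hK (sq_nonneg _)
    nlinarith [t1, t2, t3, t4, hpy]
  · -- Case I : x ∈ [2q, π]
    have hcosx : Real.cos x ≤ Real.cos (2*q) :=
      Real.cos_le_cos_of_nonneg_of_le_pi (by positivity) hxπ hx2q.le
    have hcos2q : Real.cos (2*q) = 2 * Real.cos q^2 - 1 := Real.cos_two_mul q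
    have hαS : 2/p ≤ Real.sin q := by
      rw [h2p]
      have := Real.mul_le_sin hq0.le hq2
      calc 2*q/π = 2/π * q := by ring
        _ ≤ Real.sin q := this
    have hpyq : Real.sin q^2 + Real.cos q^2 = 1 := Real.sin_sq_add_cos_sq q
    have hc1 : -1 ≤ Real.cos (p*x/2) := Real.neg_one_le_cos _
    have hc2 : Real.cos (p*x/2) ≤ 1 := Real.cos_le_one _
    have t1 : 0 ≤ 2/p * Real.sin q * (1 + Real.cos (p*x/2)) := by
      apply mul_nonneg (mul_nonneg ha0.le hS0); linarith
    have t2 : 0 ≤ (Real.cos q + 2/p * Real.sin q - 1)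
        * ((1 - Real.cos (p*x/2)) * (1 + Real.cos (p*x/2))) := by
      apply mul_nonneg hK (mul_nonneg (by linarith) (by linarith))
    have t3 : 2/p * Real.sin q ≤ Real.sin q * Real.sin q :=
      mul_le_mul_of_nonneg_right hαS hS0
    nlinarith [t1, t2, t3, hcosx]
end

section
/- Let p ≥ 2. Then for every s ∈ [0, π], 6p·cos(2s/p)·sin(2s) − 2·(p² − 4 + 2·(2 + p²)·(cos s)²)·sin(2s/p) ≤ 0. -/
open Real

/-- Chord inequality from concavity of `sin` on `[0, π]`. -/
private lemma sin_chord_s11 (a b : ℝ) (ha : 0 ≤ a) (hab : a ≤ b) (hb : b ≤ π) :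
    a * Real.sin b ≤ b * Real.sin a := by
  rcases eq_or_lt_of_le (ha.trans hab) with h | hb0
  · have ha0 : a = 0 := le_antisymm (h ▸ hab) ha
    simp [← h, ha0]
  · have hc := strictConcaveOn_sin_Icc.concaveOn
    have h0m : (0:ℝ) ∈ Set.Icc (0:ℝ) π := ⟨le_rfl, Real.pi_pos.le⟩
    have hbm : b ∈ Set.Icc (0:ℝ) π := ⟨hb0.le, hb⟩
    have hd1 : (0:ℝ) ≤ 1 - a/b := by
      have : a/b ≤ 1 := div_le_one_of_le₀ hab hb0.le
      linarith
    have hd2 : (0:ℝ) ≤ a/b := div_nonneg ha hb0.le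
    have key := hc.2 h0m hbm hd1 hd2 (by ring)
    simp only [smul_eq_mul, Real.sin_zero, mul_zero, zero_add] at key
    rw [div_mul_cancel₀ a (ne_of_gt hb0)] at key
    calc a * Real.sin b = b * (a/b * Real.sin b) := by field_simp
      _ ≤ b * Real.sin a := mul_le_mul_of_nonneg_left key hb0.le

/-- Nonnegativity of the bracket `2 cos u sin(pu/2) - p cos(pu/2) sin u`. -/
private lemma bracket_nonneg (p u : ℝ) (hp : 2 ≤ p) (hu : 0 ≤ u) (hv : p/2*u ≤ π) :
    0 ≤ 2*Real.cos u*Real.sin (p/2*u) - p*Real.cos (p/2*u)*Real.sin u := by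
  have hq1 : (1:ℝ) ≤ p/2 := by linarith
  have huv : u ≤ p/2*u := by nlinarith
  have ha0 : 0 ≤ p/2*u - u := by linarith
  have haπ : p/2*u - u ≤ π := by linarith
  have hb2π : p/2*u + u ≤ 2*π := by linarith
  have hid : 2*Real.cos u*Real.sin (p/2*u) - p*Real.cos (p/2*u)*Real.sin u
      = (1-p/2)*Real.sin (p/2*u+u) + (1+p/2)*Real.sin (p/2*u-u) := by
    rw [Real.sin_add, Real.sin_sub]; ring
  rw [hid]
  rcases le_or_gt (p/2*u+u) π with hbπ | hbπ
  · -- concavity case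
    have h1 := sin_chord_s11 (p/2*u-u) (p/2*u+u) ha0 (by linarith) hbπ
    have h4 : (1+p/2) * ((p/2*u-u) * Real.sin (p/2*u+u))
        ≤ (1+p/2) * ((p/2*u+u) * Real.sin (p/2*u-u)) :=
      mul_le_mul_of_nonneg_left h1 (by linarith)
    rcases eq_or_lt_of_le (by linarith : (0:ℝ) ≤ p/2*u+u) with hb0 | hb0
    · have hu0 : u = 0 := by nlinarith
      simp [hu0]
    · have h3 : 0 ≤ (p/2*u+u) * ((1-p/2)*Real.sin (p/2*u+u)
          + (1+p/2)*Real.sin (p/2*u-u)) := by nlinarith [h4]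
      nlinarith [h3, hb0]
  · -- sin of the large angle is nonpositive
    have hsb : Real.sin (p/2*u+u) ≤ 0 := by
      have h5 : Real.sin ((p/2*u+u) - 2*π) = Real.sin (p/2*u+u) := Real.sin_sub_two_pi _
      have h6 : Real.sin ((p/2*u+u) - 2*π) ≤ 0 :=
        Real.sin_nonpos_of_nonpos_of_neg_pi_le (by linarith) (by linarith)
      linarith
    have hsa : 0 ≤ Real.sin (p/2*u-u) := Real.sin_nonneg_of_nonneg_of_le_pi ha0 haπ
    nlinarith [mul_nonneg (show (0:ℝ) ≤ p/2-1 by linarith) (neg_nonneg.mpr hsb),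
      mul_nonneg (show (0:ℝ) ≤ 1+p/2 by linarith) hsa]

private lemma hasDerivF (p x : ℝ) :
    HasDerivAt (fun u => (2*p^2+4) * (Real.cos (p*u) * Real.sin u) + (4*p^2-4) * Real.sin u
      - 6*p*(Real.sin (p*u) * Real.cos u))
      (2*(p^2-1)*(2*Real.cos x*(1-Real.cos (p*x)) - p*Real.sin (p*x)*Real.sin x)) x := by
  have hpu : HasDerivAt (fun u : ℝ => p*u) p x := by
    simpa using (hasDerivAt_id x).const_mul p
  have hcos : HasDerivAt (fun u => Real.cos (p*u)) (-Real.sin (p*x)*p) x := by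
    exact (Real.hasDerivAt_cos (p*x)).comp x hpu
  have hsin : HasDerivAt (fun u => Real.sin (p*u)) (Real.cos (p*x)*p) x := by
    exact (Real.hasDerivAt_sin (p*x)).comp x hpu
  have H := (((hcos.mul (Real.hasDerivAt_sin x)).const_mul (2*p^2+4)).add
      ((Real.hasDerivAt_sin x).const_mul (4*p^2-4))).sub
      ((hsin.mul (Real.hasDerivAt_cos x)).const_mul (6*p))
  refine H.congr_deriv ?_
  ring

/-- `F p u ≥ 0` on the relevant range, by monotonicity. -/
private lemma F_nonneg (p u : ℝ) (hp : 2 ≤ p) (hu : 0 ≤ u) (hv : p/2*u ≤ π) :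
    0 ≤ (2*p^2+4) * (Real.cos (p*u) * Real.sin u) + (4*p^2-4) * Real.sin u
      - 6*p*(Real.sin (p*u) * Real.cos u) := by
  set F : ℝ → ℝ := fun u => (2*p^2+4) * (Real.cos (p*u) * Real.sin u)
      + (4*p^2-4) * Real.sin u - 6*p*(Real.sin (p*u) * Real.cos u) with hF
  have hmono : MonotoneOn F (Set.Icc 0 u) := by
    apply monotoneOn_of_deriv_nonneg (convex_Icc 0 u)
    · apply Continuous.continuousOn
      fun_prop
    · intro x _
      exact (hasDerivF p x).differentiableAt.differentiableWithinAt
    · intro x hx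
      rw [interior_Icc] at hx
      rw [(hasDerivF p x).deriv]
      have hx0 : 0 ≤ x := hx.1.le
      have hxv : p/2*x ≤ π := by
        have : p/2*x ≤ p/2*u := by
          apply mul_le_mul_of_nonneg_left hx.2.le (by linarith)
        linarith
      have hbr := bracket_nonneg p x hp hx0 hxv
      have hsv : 0 ≤ Real.sin (p/2*x) :=
        Real.sin_nonneg_of_nonneg_of_le_pi (by nlinarith) hxv
      have e1 : Real.cos (p*x) = 1 - 2*Real.sin (p/2*x)^2 := by
        have h2 := Real.cos_two_mul (p/2*x)
        have h3 : Real.sin (p/2*x)^2 + Real.cos (p/2*x)^2 = 1 := Real.sin_sq_add_cos_sq _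
        have h4 : p*x = 2*(p/2*x) := by ring
        rw [h4, h2]; linarith
      have e2 : Real.sin (p*x) = 2*Real.sin (p/2*x)*Real.cos (p/2*x) := by
        have h4 : p*x = 2*(p/2*x) := by ring
        rw [h4, Real.sin_two_mul]
      have key : 0 ≤ 2*Real.sin (p/2*x) *
          (2*Real.cos x*Real.sin (p/2*x) - p*Real.cos (p/2*x)*Real.sin x) :=
        mul_nonneg (by linarith) hbr
      have hp1 : (0:ℝ) ≤ p^2 - 1 := by nlinarith
      rw [e1, e2]
      nlinarith [mul_nonneg hp1 key]
  have h0 : F 0 = 0 := by simp [hF]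
  have := hmono ⟨le_rfl, hu⟩ ⟨hu, le_rfl⟩ hu
  rw [h0] at this
  exact this

/-- Lemma 3.2 of the paper: nonpositivity of `p³ (sin s)⁵ H'''(cos s)`. -/
theorem third_derivative_nonpos (p : ℝ) (hp : 2 ≤ p)
    (s : ℝ) (hs : s ∈ Set.Icc (0 : ℝ) π) :
    6 * p * Real.cos (2 * s / p) * Real.sin (2 * s) -
      2 * (p ^ 2 - 4 + 2 * (2 + p ^ 2) * (Real.cos s) ^ 2) * Real.sin (2 * s / p)
      ≤ 0 := by
  have hp0 : (0:ℝ) < p := by linarith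
  set u : ℝ := 2 * s / p with hu_def
  have hpu : p * u = 2 * s := by
    rw [hu_def]; field_simp
  have hv : p/2 * u = s := by
    rw [hu_def]; field_simp
  have hu0 : 0 ≤ u := div_nonneg (by linarith [hs.1]) hp0.le
  have hF := F_nonneg p u hp hu0 (by rw [hv]; exact hs.2)
  have hcos2 : Real.cos (p*u) = 2*Real.cos s^2 - 1 := by
    rw [hpu]; exact Real.cos_two_mul s
  have hprod : Real.cos (p*u) * Real.sin u = (2*Real.cos s^2 - 1) * Real.sin u := by
    rw [hcos2]
  rw [hprod] at hF
  rw [← hpu]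
  nlinarith [hF]
end

section
/- Let p ≥ 2. Then for every s ∈ (0, π), cos(s)/sin(s) ≤ (2/p)·cos(2s/p)/sin(2s/p), i.e. cot s − (2/p)·cot(2s/p) ≤ 0. -/
open Real

lemma xcot_strictAntiOn : StrictAntiOn (fun x : ℝ => x * (Real.cos x / Real.sin x))
    (Set.Ioo (0 : ℝ) π) := by
  have hsin : ∀ x ∈ Set.Ioo (0:ℝ) π, Real.sin x ≠ 0 := fun x hx =>
    ne_of_gt (Real.sin_pos_of_pos_of_lt_pi hx.1 hx.2)
  apply strictAntiOn_of_deriv_neg (convex_Ioo 0 π)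
  · exact (continuousOn_id.mul (Real.continuousOn_cos.div Real.continuousOn_sin hsin))
  · intro x hx
    rw [interior_Ioo] at hx
    have hs0 := hsin x hx
    have hcot : HasDerivAt (fun x : ℝ => Real.cos x / Real.sin x)
        ((-Real.sin x * Real.sin x - Real.cos x * Real.cos x) / Real.sin x ^ 2) x :=
      (Real.hasDerivAt_cos x).div (Real.hasDerivAt_sin x) hs0
    have h : HasDerivAt (fun x : ℝ => x * (Real.cos x / Real.sin x))
        (1 * (Real.cos x / Real.sin x) +
          x * ((-Real.sin x * Real.sin x - Real.cos x * Real.cos x) / Real.sin x ^ 2)) x :=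
      (hasDerivAt_id x).mul hcot
    rw [h.deriv]
    have hsq : (0:ℝ) < Real.sin x ^ 2 := by positivity
    have hnum : Real.sin x * Real.cos x - x < 0 := by
      have h2 : Real.sin (2 * x) < 2 * x := Real.sin_lt (by linarith [hx.1])
      rw [Real.sin_two_mul] at h2
      nlinarith
    have heq : 1 * (Real.cos x / Real.sin x) +
        x * ((-Real.sin x * Real.sin x - Real.cos x * Real.cos x) / Real.sin x ^ 2)
        = (Real.sin x * Real.cos x - x) / Real.sin x ^ 2 := by
      have hpyth := Real.sin_sq_add_cos_sq x
      field_simp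
      linear_combination (-x) * hpyth
    rw [heq]
    exact div_neg_of_neg_of_pos hnum hsq

/-- The auxiliary inequality `cot s − (2/p)·cot(2s/p) ≤ 0` from the proof of
Lemma 3.2 of the paper. -/
theorem cot_inequality (p : ℝ) (hp : 2 ≤ p)
    (s : ℝ) (hs : s ∈ Set.Ioo (0 : ℝ) π) :
    Real.cos s / Real.sin s ≤
      (2 / p) * (Real.cos (2 * s / p) / Real.sin (2 * s / p)) := by
  obtain ⟨hs0, hsπ⟩ := hs
  have hp0 : (0:ℝ) < p := by linarith
  set t := 2 * s / p with ht
  have ht0 : 0 < t := by positivity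
  have hts : t ≤ s := by
    rw [ht, div_le_iff₀ hp0]
    nlinarith
  have htπ : t < π := lt_of_le_of_lt hts hsπ
  have key : s * (Real.cos s / Real.sin s) ≤ t * (Real.cos t / Real.sin t) := by
    rcases eq_or_lt_of_le hts with h | h
    · rw [h]
    · exact le_of_lt (xcot_strictAntiOn ⟨ht0, htπ⟩ ⟨hs0, hsπ⟩ h)
  have h2p : t * (Real.cos t / Real.sin t) = s * ((2/p) * (Real.cos t / Real.sin t)) := by
    rw [ht]; ring
  rw [h2p] at key
  exact le_of_mul_le_mul_left (by linarith) hs0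
end

section
/- Let p ≥ 2. Then for every t ∈ [0, 1], (1 − t)^{2/p} ≤ 1 − 2t/p − (p − 2)·t²/p². -/
open Real

lemma key_quad_bound (s : ℝ) (hs0 : 0 < s) (hs1 : s ≤ 1) (t : ℝ) (ht0 : 0 ≤ t) (ht1 : t ≤ 1) :
    (1 - t) ^ s ≤ 1 - s * t - s * (1 - s) * t ^ 2 / 2 := by
  set g : ℝ → ℝ := fun x => 1 - s * x - s * (1 - s) * x ^ 2 / 2 - (1 - x) ^ s with hg
  have hcont : Continuous g := by
    apply Continuous.sub
    · fun_prop
    · apply Continuous.comp (g := fun y : ℝ => y ^ s) _ (by fun_prop)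
      exact continuous_iff_continuousAt.2 fun x =>
        Real.continuousAt_rpow_const x s (Or.inr hs0.le)
  have hderiv : ∀ x ∈ Set.Ioo (0:ℝ) 1, HasDerivAt g (-s - s * (1 - s) * x + s * (1 - x) ^ (s - 1)) x := by
    intro x hx
    have h1x : (0:ℝ) < 1 - x := by linarith [hx.2]
    have h1 : HasDerivAt (fun y : ℝ => (1 - y) ^ s) (s * (1 - x) ^ (s - 1) * (-1)) x := by
      have := (Real.hasDerivAt_rpow_const (x := 1 - x) (p := s) (Or.inl h1x.ne')).comp x
        (((hasDerivAt_id x).const_sub 1))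
      simpa [Function.comp_def] using this
    have h2 : HasDerivAt (fun y : ℝ => 1 - s * y - s * (1 - s) * y ^ 2 / 2)
        (-s - s * (1 - s) * x) x := by
      have : HasDerivAt (fun y : ℝ => 1 - s * y - s * (1 - s) * y ^ 2 / 2)
          (0 - s * 1 - s * (1 - s) * (2 * x ^ 1) / 2) x := by
        exact (((hasDerivAt_const x (1:ℝ)).sub ((hasDerivAt_id x).const_mul s)).sub
          (((hasDerivAt_pow 2 x).const_mul (s * (1 - s))).div_const 2))
      convert this using 1
      ring
    have := h2.sub h1
    convert (show HasDerivAt g (-s - s * (1 - s) * x - s * (1 - x) ^ (s - 1) * -1) x from this) using 1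
    ring
  have hderiv_nonneg : ∀ x ∈ Set.Ioo (0:ℝ) 1,
      0 ≤ -s - s * (1 - s) * x + s * (1 - x) ^ (s - 1) := by
    intro x hx
    have h1x : (0:ℝ) < 1 - x := by linarith [hx.2]
    -- Bernoulli: (1 - x)^(1-s) ≤ 1 - (1-s)x
    have hb : (1 - x) ^ (1 - s) ≤ 1 - (1 - s) * x := by
      have := rpow_one_add_le_one_add_mul_self (s := -x) (by linarith [hx.2])
        (p := 1 - s) (by linarith) (by linarith)
      have e1 : (1 : ℝ) + -x = 1 - x := by ring
      have e2 : (1 : ℝ) + (1 - s) * -x = 1 - (1 - s) * x := by ring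
      rwa [e1, e2] at this
    have hpos1 : (0:ℝ) < (1 - x) ^ (1 - s) := Real.rpow_pos_of_pos h1x _
    have hpos2 : (0:ℝ) < 1 - (1 - s) * x := lt_of_lt_of_le hpos1 hb
    -- (1-x)^(s-1) = ((1-x)^(1-s))⁻¹ ≥ (1 - (1-s)x)⁻¹ ≥ 1 + (1-s)x
    have hinv : (1 - x) ^ (s - 1) = ((1 - x) ^ (1 - s))⁻¹ := by
      rw [← Real.rpow_neg h1x.le]; ring_nf
    have h3 : (1 + (1 - s) * x) ≤ ((1 - x) ^ (1 - s))⁻¹ := by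
      have h4 : (1 + (1 - s) * x) ≤ (1 - (1 - s) * x)⁻¹ := by
        rw [← one_div, le_div_iff₀ hpos2]
        nlinarith [sq_nonneg ((1 - s) * x)]
      exact h4.trans (by gcongr)
    have h5 : 1 + (1 - s) * x ≤ (1 - x) ^ (s - 1) := by rw [hinv]; exact h3
    nlinarith [mul_le_mul_of_nonneg_left h5 hs0.le]
  have hmono : MonotoneOn g (Set.Icc 0 1) := by
    apply monotoneOn_of_deriv_nonneg (convex_Icc 0 1) hcont.continuousOn
    · intro x hx
      rw [interior_Icc] at hx
      exact (hderiv x hx).differentiableAt.differentiableWithinAt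
    · intro x hx
      rw [interior_Icc] at hx
      rw [(hderiv x hx).deriv]
      exact hderiv_nonneg x hx
  have h0 : g 0 = 0 := by simp [hg]
  have := hmono (Set.mem_Icc.2 ⟨le_refl 0, zero_le_one⟩) (Set.mem_Icc.2 ⟨ht0, ht1⟩) ht0
  rw [h0] at this
  simp only [hg] at this
  linarith

/-- Inequality (3.10) of the paper: a quadratic upper bound for `(1 − t)^{2/p}`. -/
theorem rpow_quadratic_bound (p : ℝ) (hp : 2 ≤ p)
    (t : ℝ) (ht : t ∈ Set.Icc (0 : ℝ) 1) :
    (1 - t) ^ ((2 : ℝ) / p) ≤ 1 - 2 * t / p - (p - 2) * t ^ 2 / p ^ 2 := by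
  have hp0 : (0:ℝ) < p := by linarith
  have hs0 : 0 < (2:ℝ) / p := by positivity
  have hs1 : (2:ℝ) / p ≤ 1 := by
    rw [div_le_one hp0]; linarith
  have h := key_quad_bound ((2:ℝ)/p) hs0 hs1 t ht.1 ht.2
  have heq : 1 - (2:ℝ)/p * t - (2:ℝ)/p * (1 - (2:ℝ)/p) * t ^ 2 / 2
      = 1 - 2 * t / p - (p - 2) * t ^ 2 / p ^ 2 := by
    field_simp
  linarith [h, heq.ge, heq.le]
end

section
/- Let p ≥ 2 and 0 < b < 1. Then 4·(b − b^{p/2})² ≤ (p − 2)²·b·(1 − b)². -/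
open Real

/-- Core inequality: for `0 < b < 1`, `0 ≤ 1 - b + √b · log b`. -/
lemma core_ineq (b : ℝ) (hb0 : 0 < b) (hb1 : b < 1) :
    0 ≤ 1 - b + Real.sqrt b * Real.log b := by
  have hlb : Real.log b < 0 := Real.log_neg hb0 hb1
  set y : ℝ := -(Real.log b / 2) with hy
  have hy0 : 0 < y := by simp [hy]; linarith
  have hsb : Real.sqrt b = Real.exp (-y) := by
    rw [hy, neg_neg]
    rw [show Real.log b / 2 = Real.log (Real.sqrt b) by
      rw [Real.log_sqrt hb0.le]]
    rw [Real.exp_log (Real.sqrt_pos.mpr hb0)]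
  have hb : b = Real.exp (-y) * Real.exp (-y) := by
    rw [← hsb, Real.mul_self_sqrt hb0.le]
  have hsinh : y < Real.sinh y := Real.self_lt_sinh_iff.mpr hy0
  rw [Real.sinh_eq] at hsinh
  have h1 : Real.exp (-y) * Real.exp y = 1 := by
    rw [← Real.exp_add]; simp
  have h2 : (0:ℝ) < Real.exp (-y) := Real.exp_pos _
  have hlog : Real.log b = -(2*y) := by rw [hy]; ring
  rw [hlog, hsb, hb]
  nlinarith [h2, h1, hsinh]

/-- Lemma 3.4 of the paper: `4(b − b^{p/2})² ≤ (p − 2)²·b·(1 − b)²`. -/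
theorem lemma_b_power (p b : ℝ) (hp : 2 ≤ p) (hb0 : 0 < b) (hb1 : b < 1) :
    4 * (b - b ^ (p / 2)) ^ 2 ≤ (p - 2) ^ 2 * b * (1 - b) ^ 2 := by
  have hlb : Real.log b < 0 := Real.log_neg hb0 hb1
  set c := Real.log b with hc
  have hsb : 0 < Real.sqrt b := Real.sqrt_pos.mpr hb0
  set f : ℝ → ℝ := fun t => t * (1 - b) - Real.sqrt b * (1 - Real.exp (t * c)) with hf
  have hderiv : ∀ t : ℝ, HasDerivAt f ((1 - b) + Real.sqrt b * (c * Real.exp (t * c))) t := by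
    intro t
    have h1 : HasDerivAt (fun t : ℝ => t * c) c t := by
      simpa using (hasDerivAt_id t).mul_const c
    have h2 : HasDerivAt (fun t : ℝ => Real.exp (t * c)) (Real.exp (t * c) * c) t :=
      h1.exp
    have h3 : HasDerivAt (fun t : ℝ => t * (1 - b)) (1 - b) t := by
      simpa using (hasDerivAt_id t).mul_const (1 - b)
    have h4 : HasDerivAt (fun t : ℝ => Real.sqrt b * (1 - Real.exp (t * c)))
        (Real.sqrt b * (0 - Real.exp (t * c) * c)) t :=
      (((hasDerivAt_const t (1:ℝ)).sub h2)).const_mul (Real.sqrt b)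
    have : HasDerivAt ((fun t : ℝ => t * (1 - b)) - fun t => Real.sqrt b * (1 - Real.exp (t * c)))
        (1 - b - Real.sqrt b * (0 - Real.exp (t * c) * c)) t := h3.sub h4
    convert this using 1
    · rfl
    · ring
  have hmono : MonotoneOn f (Set.Ici 0) := by
    apply monotoneOn_of_deriv_nonneg (convex_Ici 0)
    · exact (Continuous.continuousOn (by fun_prop))
    · intro t ht
      exact ((hderiv t).differentiableAt).differentiableWithinAt
    · intro t ht
      rw [(hderiv t).deriv]
      have ht0 : 0 < t := by simpa using ht
      have hexp : Real.exp (t * c) ≤ 1 := by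
        apply Real.exp_le_one_iff.mpr
        nlinarith
      have hcore := core_ineq b hb0 hb1
      nlinarith [Real.exp_pos (t * c)]
  set t := p / 2 - 1 with htdef
  have ht0 : (0:ℝ) ≤ t := by simp [htdef]; linarith
  have hft : 0 ≤ f t := by
    have h0 : f 0 = 0 := by simp [hf]
    have := hmono (Set.mem_Ici.mpr le_rfl) (Set.mem_Ici.mpr ht0) ht0
    linarith [this, h0.symm.le]
  have hbt : b ^ t = Real.exp (t * c) := by
    rw [Real.rpow_def_of_pos hb0, mul_comm]
  have h1 : Real.sqrt b * (1 - b ^ t) ≤ t * (1 - b) := by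
    rw [hbt]; simp only [hf] at hft; linarith
  have hsplit : b ^ (p / 2) = b * b ^ t := by
    rw [htdef, show p / 2 = 1 + (p / 2 - 1) by ring, Real.rpow_add hb0, Real.rpow_one]
    ring_nf
  have hbt1 : b ^ t ≤ 1 := Real.rpow_le_one hb0.le hb1.le ht0
  have hLnn : 0 ≤ Real.sqrt b * (1 - b ^ t) := by
    apply mul_nonneg hsb.le; linarith
  have hsq : (Real.sqrt b * (1 - b ^ t)) ^ 2 ≤ (t * (1 - b)) ^ 2 := by
    apply pow_le_pow_left₀ hLnn h1 2
  have hb2 : Real.sqrt b ^ 2 = b := Real.sq_sqrt hb0.le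
  have hkey : (b - b ^ (p / 2)) ^ 2 = b * (Real.sqrt b * (1 - b ^ t)) ^ 2 := by
    rw [hsplit]; nlinarith [hb2]
  rw [hkey]
  have h2t : p - 2 = 2 * t := by rw [htdef]; ring
  rw [h2t]
  nlinarith [hsq, hb0.le, mul_le_mul_of_nonneg_left hsq hb0.le]
end

section
/- Let p ≥ 2 and set q = π/p. Then for all s ∈ [0, 1] and t ∈ [0, 1], −6t + (−4 − 4s·(t − 1) + 6t)·cos q + √2·√((1 + s²·(t − 1))·t·(4·(2 − t)·cos q + t·(3 + cos(2q)))) ≤ 4t·(cos q − 1). -/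
open Real

/-- The maximum-value claim for the function `g(s,t)` in case (ii) of the proof
of Theorem 1.3: `g(s,t) ≤ g(s₀,t) = 4t(cos q − 1)`, where `q = π/p`. -/
theorem g_st_max (p : ℝ) (hp : 2 ≤ p)
    (q : ℝ) (hq : q = π / p)
    (s t : ℝ) (hs : s ∈ Set.Icc (0 : ℝ) 1) (ht : t ∈ Set.Icc (0 : ℝ) 1) :
    -6 * t + (-4 - 4 * s * (t - 1) + 6 * t) * Real.cos q +
      Real.sqrt 2 * Real.sqrt ((1 + s ^ 2 * (t - 1)) * t *
        (4 * (2 - t) * Real.cos q + t * (3 + Real.cos (2 * q))))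
      ≤ 4 * t * (Real.cos q - 1) := by
  obtain ⟨hs0, hs1⟩ := hs
  obtain ⟨ht0, ht1⟩ := ht
  have hp0 : (0 : ℝ) < p := by linarith
  have hπ := Real.pi_pos
  have hq0 : 0 ≤ q := by rw [hq]; positivity
  have hq2 : q ≤ π / 2 := by
    rw [hq]
    rw [div_le_div_iff₀ hp0 (by norm_num)]
    nlinarith
  have hc0 : 0 ≤ Real.cos q := Real.cos_nonneg_of_mem_Icc ⟨by linarith, hq2⟩
  have hc1 : Real.cos q ≤ 1 := Real.cos_le_one q
  set c := Real.cos q with hc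
  have hcos2 : Real.cos (2 * q) = 2 * c ^ 2 - 1 := by
    rw [Real.cos_two_mul]
  rw [hcos2]
  set X := (1 + s ^ 2 * (t - 1)) * t * (4 * (2 - t) * c + t * (3 + (2 * c ^ 2 - 1))) with hX
  set R := 2 * t * (1 - c) + 4 * c * (1 + s * (t - 1)) with hR
  have h1s : 0 ≤ 1 + s * (t - 1) := by nlinarith
  have hRnn : 0 ≤ R := by
    rw [hR]
    have : 0 ≤ 2 * t * (1 - c) := by nlinarith
    nlinarith
  have hkey : Real.sqrt 2 * Real.sqrt X = Real.sqrt (2 * X) :=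
    (Real.sqrt_mul (by norm_num) X).symm
  have h2X : 2 * X ≤ R ^ 2 := by
    rw [hX, hR]
    nlinarith [mul_nonneg (sub_nonneg.2 ht1)
      (sq_nonneg (2 * c * (1 - s) - s * t * (1 - c))), sq_nonneg (1 - s), sq_nonneg s]
  have hle : Real.sqrt (2 * X) ≤ R := by
    calc Real.sqrt (2 * X) ≤ Real.sqrt (R ^ 2) := Real.sqrt_le_sqrt h2X
      _ = R := by rw [Real.sqrt_sq hRnn]
  rw [hkey]
  have hfin : -6 * t + (-4 - 4 * s * (t - 1) + 6 * t) * c + R = 4 * t * (c - 1) := by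
    rw [hR]; ring
  linarith
end

section
/- Let p ≥ 2. Then 2 − 4/p² − 2·cos(π/p) − (2/p)·sin(π/p) ≤ 0, with equality if and only if p = 2. -/
open Real

private lemma nonneg_of_deriv {f f' : ℝ → ℝ}
    (hf : ∀ x, HasDerivAt f (f' x) x) (h0 : f 0 = 0)
    (hd : ∀ x, 0 ≤ x → 0 ≤ f' x) {x : ℝ} (hx : 0 ≤ x) : 0 ≤ f x := by
  have hmono : MonotoneOn f (Set.Ici 0) := by
    refine monotoneOn_of_deriv_nonneg (convex_Ici 0)
      (fun y _ => (hf y).continuousAt.continuousWithinAt)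
      (fun y _ => (hf y).differentiableAt.differentiableWithinAt) ?_
    intro y hy
    rw [interior_Ici] at hy
    rw [(hf y).deriv]
    exact hd y hy.le
  have h := hmono Set.self_mem_Ici (Set.mem_Ici.mpr hx) hx
  linarith [h0 ▸ h]

private lemma sin_ge_taylor {x : ℝ} (hx : 0 ≤ x) : x - x ^ 3 / 6 ≤ Real.sin x := by
  have key : 0 ≤ Real.sin x - (x - x ^ 3 / 6) := by
    refine nonneg_of_deriv (f := fun y => Real.sin y - (y - y ^ 3 / 6))
      (f' := fun y => Real.cos y - (1 - y ^ 2 / 2)) ?_ (by norm_num) ?_ hx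
    · intro y
      have h : HasDerivAt (fun z : ℝ => Real.sin z - (z - z ^ 3 / 6))
          (Real.cos y - (1 - (3 : ℕ) * y ^ (3 - 1) / 6)) y :=
        (Real.hasDerivAt_sin y).sub ((hasDerivAt_id' y).sub ((hasDerivAt_pow 3 y).div_const 6))
      convert h using 1
      norm_num
      ring
    · intro y _
      have := Real.one_sub_sq_div_two_le_cos (x := y)
      linarith
  linarith

private lemma cos_le_taylor {x : ℝ} (hx : 0 ≤ x) :
    Real.cos x ≤ 1 - x ^ 2 / 2 + x ^ 4 / 24 := by
  have key : 0 ≤ 1 - x ^ 2 / 2 + x ^ 4 / 24 - Real.cos x := by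
    refine nonneg_of_deriv (f := fun y => 1 - y ^ 2 / 2 + y ^ 4 / 24 - Real.cos y)
      (f' := fun y => Real.sin y - (y - y ^ 3 / 6)) ?_ (by norm_num) ?_ hx
    · intro y
      have h : HasDerivAt (fun z : ℝ => 1 - z ^ 2 / 2 + z ^ 4 / 24 - Real.cos z)
          ((0 - (2 : ℕ) * y ^ (2 - 1) / 2 + (4 : ℕ) * y ^ (4 - 1) / 24) - (-Real.sin y)) y :=
        (((hasDerivAt_const y (1:ℝ)).sub ((hasDerivAt_pow 2 y).div_const 2)).add
          ((hasDerivAt_pow 4 y).div_const 24)).sub (Real.hasDerivAt_cos y)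
      convert h using 1
      norm_num
      ring
    · intro y hy
      linarith [sin_ge_taylor hy]
  linarith

private lemma sin_le_taylor {x : ℝ} (hx : 0 ≤ x) :
    Real.sin x ≤ x - x ^ 3 / 6 + x ^ 5 / 120 := by
  have key : 0 ≤ x - x ^ 3 / 6 + x ^ 5 / 120 - Real.sin x := by
    refine nonneg_of_deriv (f := fun y => y - y ^ 3 / 6 + y ^ 5 / 120 - Real.sin y)
      (f' := fun y => 1 - y ^ 2 / 2 + y ^ 4 / 24 - Real.cos y) ?_ (by norm_num) ?_ hx
    · intro y
      have h : HasDerivAt (fun z : ℝ => z - z ^ 3 / 6 + z ^ 5 / 120 - Real.sin z)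
          ((1 - (3 : ℕ) * y ^ (3 - 1) / 6 + (5 : ℕ) * y ^ (5 - 1) / 120) - Real.cos y) y :=
        (((hasDerivAt_id' y).sub ((hasDerivAt_pow 3 y).div_const 6)).add
          ((hasDerivAt_pow 5 y).div_const 120)).sub (Real.hasDerivAt_sin y)
      convert h using 1
      norm_num
      ring
    · intro y hy
      linarith [cos_le_taylor hy]
  linarith

set_option maxHeartbeats 1000000 in
private lemma N_pos {x : ℝ} (h0 : 0 < x) (h4 : x < π / 4) :
    0 < (π + 1) * x * (Real.sin x * Real.cos x) + x ^ 2 * Real.sin x ^ 2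
      - x ^ 2 * Real.cos x ^ 2 - π * Real.sin x ^ 2 := by
  have hpl := Real.pi_gt_d6
  have hpu := Real.pi_lt_d6
  have hx1 : x < 0.7853983 := by nlinarith
  have hs1 := sin_ge_taylor h0.le
  have hs2 := sin_le_taylor h0.le
  have hc1 := Real.one_sub_sq_div_two_le_cos (x := x)
  have hc2 := cos_le_taylor h0.le
  have hs0 : 0 < Real.sin x := Real.sin_pos_of_pos_of_lt_pi h0 (by nlinarith)
  have hc0 : 0 < Real.cos x := Real.cos_pos_of_mem_Ioo ⟨by nlinarith, by nlinarith⟩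
  have hlo : 0 ≤ x - x ^ 3 / 6 := by nlinarith
  have hclo : 0 ≤ 1 - x ^ 2 / 2 := by nlinarith
  have h1 : (x - x ^ 3 / 6) * (1 - x ^ 2 / 2) ≤ Real.sin x * Real.cos x :=
    mul_le_mul hs1 hc1 hclo hs0.le
  have h2 : (x - x ^ 3 / 6) ^ 2 ≤ Real.sin x ^ 2 := by nlinarith
  have h3 : Real.cos x ^ 2 ≤ (1 - x ^ 2 / 2 + x ^ 4 / 24) ^ 2 := by nlinarith
  have h4' : Real.sin x ^ 2 ≤ (x - x ^ 3 / 6 + x ^ 5 / 120) ^ 2 := by nlinarith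
  have hQ : 0 < (4 / 3 - π / 3) - (7 / 12 - 7 * π / 180) * x ^ 2
      + (5 / 72 + π / 360) * x ^ 4 - (1 / 576 + π / 14400) * x ^ 6 := by
    have ht : x ^ 2 ≤ 0.61686 := by nlinarith
    have ht6 : x ^ 6 ≤ 0.2348 := by
      have h3 : (x ^ 2) ^ 3 ≤ (0.61686 : ℝ) ^ 3 := pow_le_pow_left₀ (sq_nonneg x) ht 3
      calc x ^ 6 = (x ^ 2) ^ 3 := by ring
        _ ≤ (0.61686 : ℝ) ^ 3 := h3
        _ ≤ 0.2348 := by norm_num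
    have hb1 : (7 / 12 - 7 * π / 180) * x ^ 2 ≤ 0.46117 * 0.61686 :=
      mul_le_mul (by nlinarith) ht (sq_nonneg x) (by norm_num)
    have hb2 : (1 / 576 + π / 14400) * x ^ 6 ≤ 0.001955 * 0.2348 :=
      mul_le_mul (by nlinarith) ht6 (by positivity) (by norm_num)
    have hb3 : (0:ℝ) ≤ (5 / 72 + π / 360) * x ^ 4 := by positivity
    nlinarith
  have key : 0 < (π + 1) * x * ((x - x ^ 3 / 6) * (1 - x ^ 2 / 2)) + x ^ 2 * (x - x ^ 3 / 6) ^ 2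
      - x ^ 2 * (1 - x ^ 2 / 2 + x ^ 4 / 24) ^ 2 - π * (x - x ^ 3 / 6 + x ^ 5 / 120) ^ 2 := by
    have hEq : (π + 1) * x * ((x - x ^ 3 / 6) * (1 - x ^ 2 / 2)) + x ^ 2 * (x - x ^ 3 / 6) ^ 2
      - x ^ 2 * (1 - x ^ 2 / 2 + x ^ 4 / 24) ^ 2 - π * (x - x ^ 3 / 6 + x ^ 5 / 120) ^ 2
      = x ^ 4 * ((4 / 3 - π / 3) - (7 / 12 - 7 * π / 180) * x ^ 2
        + (5 / 72 + π / 360) * x ^ 4 - (1 / 576 + π / 14400) * x ^ 6) := by ring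
    rw [hEq]
    exact mul_pos (pow_pos h0 4) hQ
  have hA : (π + 1) * x * ((x - x ^ 3 / 6) * (1 - x ^ 2 / 2))
      ≤ (π + 1) * x * (Real.sin x * Real.cos x) :=
    mul_le_mul_of_nonneg_left h1 (by positivity)
  have hB : x ^ 2 * (x - x ^ 3 / 6) ^ 2 ≤ x ^ 2 * Real.sin x ^ 2 :=
    mul_le_mul_of_nonneg_left h2 (sq_nonneg x)
  have hC : x ^ 2 * Real.cos x ^ 2 ≤ x ^ 2 * (1 - x ^ 2 / 2 + x ^ 4 / 24) ^ 2 :=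
    mul_le_mul_of_nonneg_left h3 (sq_nonneg x)
  have hD : π * Real.sin x ^ 2 ≤ π * (x - x ^ 3 / 6 + x ^ 5 / 120) ^ 2 :=
    mul_le_mul_of_nonneg_left h4' Real.pi_pos.le
  linarith

private noncomputable def Mf (t : ℝ) : ℝ :=
  (π ^ 2 * Real.sin t ^ 2 - 2 * π * (t * (Real.sin t * Real.cos t)) - 4 * t ^ 2) / t ^ 2

private lemma Mf_hasDerivAt {θ : ℝ} (hθ : θ ≠ 0) :
    HasDerivAt Mf
      (((π ^ 2 * (2 * Real.sin θ * Real.cos θ)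
          - 2 * π * (Real.sin θ * Real.cos θ
            + θ * (Real.cos θ * Real.cos θ + Real.sin θ * (-Real.sin θ))) - 8 * θ) * θ ^ 2
        - (π ^ 2 * Real.sin θ ^ 2 - 2 * π * (θ * (Real.sin θ * Real.cos θ)) - 4 * θ ^ 2)
          * (2 * θ)) / (θ ^ 2) ^ 2) θ := by
  have hsq : HasDerivAt (fun t : ℝ => t ^ 2) (2 * θ) θ := by
    simpa using hasDerivAt_pow 2 θ
  have h1 : HasDerivAt (fun t : ℝ => Real.sin t ^ 2) (2 * Real.sin θ * Real.cos θ) θ := by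
    simpa using (Real.hasDerivAt_sin θ).fun_pow 2
  have h2 : HasDerivAt (fun t : ℝ => t * (Real.sin t * Real.cos t))
      (1 * (Real.sin θ * Real.cos θ)
        + θ * (Real.cos θ * Real.cos θ + Real.sin θ * (-Real.sin θ))) θ :=
    (hasDerivAt_id' θ).mul ((Real.hasDerivAt_sin θ).mul (Real.hasDerivAt_cos θ))
  have hF : HasDerivAt
      (fun t : ℝ => π ^ 2 * Real.sin t ^ 2 - 2 * π * (t * (Real.sin t * Real.cos t)) - 4 * t ^ 2)
      (π ^ 2 * (2 * Real.sin θ * Real.cos θ)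
        - 2 * π * (Real.sin θ * Real.cos θ
          + θ * (Real.cos θ * Real.cos θ + Real.sin θ * (-Real.sin θ))) - 8 * θ) θ := by
    have := ((h1.const_mul (π ^ 2)).fun_sub (h2.const_mul (2 * π))).fun_sub (hsq.const_mul 4)
    exact this.congr_deriv (by ring)
  exact hF.div hsq (pow_ne_zero 2 hθ)

private lemma Mf_strictMono : StrictMonoOn Mf (Set.Ioc 0 (π / 4)) := by
  have hπ4 : (0 : ℝ) < π / 4 := by positivity
  refine strictMonoOn_of_deriv_pos (convex_Ioc 0 (π / 4)) ?_ ?_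
  · apply ContinuousOn.div
    · fun_prop
    · fun_prop
    · exact fun t ht => pow_ne_zero 2 (ne_of_gt ht.1)
  · intro θ hθ
    rw [interior_Ioc] at hθ
    obtain ⟨h0, h4⟩ := hθ
    rw [(Mf_hasDerivAt h0.ne').deriv]
    have hN := N_pos h0 h4
    have hEq : ((π ^ 2 * (2 * Real.sin θ * Real.cos θ)
          - 2 * π * (Real.sin θ * Real.cos θ
            + θ * (Real.cos θ * Real.cos θ + Real.sin θ * (-Real.sin θ))) - 8 * θ) * θ ^ 2
        - (π ^ 2 * Real.sin θ ^ 2 - 2 * π * (θ * (Real.sin θ * Real.cos θ)) - 4 * θ ^ 2)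
          * (2 * θ)) / (θ ^ 2) ^ 2
        = 2 * π * ((π + 1) * θ * (Real.sin θ * Real.cos θ) + θ ^ 2 * Real.sin θ ^ 2
            - θ ^ 2 * Real.cos θ ^ 2 - π * Real.sin θ ^ 2) / θ ^ 3 := by
      field_simp
      ring
    rw [hEq]
    exact div_pos (by positivity) (pow_pos h0 3)

private lemma F_nonpos {θ : ℝ} (h0 : 0 < θ) (h4 : θ ≤ π / 4) :
    π ^ 2 * Real.sin θ ^ 2 - 2 * π * (θ * (Real.sin θ * Real.cos θ)) - 4 * θ ^ 2 ≤ 0 ∧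
    (π ^ 2 * Real.sin θ ^ 2 - 2 * π * (θ * (Real.sin θ * Real.cos θ)) - 4 * θ ^ 2 = 0 ↔
      θ = π / 4) := by
  have hπ4 : (0 : ℝ) < π / 4 := by positivity
  have hF4 : π ^ 2 * Real.sin (π / 4) ^ 2
      - 2 * π * ((π / 4) * (Real.sin (π / 4) * Real.cos (π / 4))) - 4 * (π / 4) ^ 2 = 0 := by
    rw [Real.sin_pi_div_four, Real.cos_pi_div_four]
    have h2 : Real.sqrt 2 ^ 2 = 2 := Real.sq_sqrt (by norm_num)
    linear_combination (π ^ 2 / 8) * h2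
  rcases eq_or_lt_of_le h4 with heq | hlt
  · rw [heq]
    exact ⟨le_of_eq hF4, iff_of_true hF4 rfl⟩
  · have hM : Mf θ < Mf (π / 4) :=
      Mf_strictMono ⟨h0, h4⟩ ⟨hπ4, le_refl _⟩ hlt
    have hM4 : Mf (π / 4) = 0 := by
      unfold Mf
      rw [hF4]
      simp
    have hMθ : Mf θ < 0 := hM4 ▸ hM
    have hFθ : π ^ 2 * Real.sin θ ^ 2 - 2 * π * (θ * (Real.sin θ * Real.cos θ)) - 4 * θ ^ 2
        = Mf θ * θ ^ 2 := by
      unfold Mf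
      field_simp
    have hFneg : π ^ 2 * Real.sin θ ^ 2 - 2 * π * (θ * (Real.sin θ * Real.cos θ)) - 4 * θ ^ 2
        < 0 := by
      rw [hFθ]
      exact mul_neg_of_neg_of_pos hMθ (pow_pos h0 2)
    refine ⟨hFneg.le, ?_, ?_⟩
    · intro h; linarith
    · intro h; exact absurd h (by linarith)

private lemma E_eq (p : ℝ) (hp : 0 < p) :
    2 - 4 / p ^ 2 - 2 * Real.cos (π / p) - (2 / p) * Real.sin (π / p)
      = (4 / π ^ 2) * (π ^ 2 * Real.sin (π / (2 * p)) ^ 2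
        - 2 * π * ((π / (2 * p)) * (Real.sin (π / (2 * p)) * Real.cos (π / (2 * p))))
        - 4 * (π / (2 * p)) ^ 2) := by
  have hπ := Real.pi_ne_zero
  have h2θ : π / p = 2 * (π / (2 * p)) := by
    field_simp
  rw [h2θ, Real.cos_two_mul, Real.sin_two_mul, Real.cos_sq']
  field_simp
  ring

/-- The evaluation `H'(1) = 2 − 4/p² − 2 cos(π/p) − (2/p) sin(π/p) ≤ 0`
used in the proof of Lemma 3.1, with equality exactly at `p = 2`. -/
theorem H_prime_one_nonpos (p : ℝ) (hp : 2 ≤ p) :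
    2 - 4 / p ^ 2 - 2 * Real.cos (π / p) - (2 / p) * Real.sin (π / p) ≤ 0 ∧
    (2 - 4 / p ^ 2 - 2 * Real.cos (π / p) - (2 / p) * Real.sin (π / p) = 0 ↔
      p = 2) := by
  have hp0 : (0 : ℝ) < p := by linarith
  have hπ := Real.pi_pos
  have hθ0 : 0 < π / (2 * p) := by positivity
  have hθ4 : π / (2 * p) ≤ π / 4 := by
    apply div_le_div_of_nonneg_left hπ.le (by norm_num)
    linarith
  obtain ⟨hle, hiff⟩ := F_nonpos hθ0 hθ4
  have hE := E_eq p hp0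
  have hc : (0 : ℝ) < 4 / π ^ 2 := by positivity
  constructor
  · rw [hE]
    exact mul_nonpos_of_nonneg_of_nonpos hc.le hle
  · rw [hE]
    constructor
    · intro h
      have hF0 : π ^ 2 * Real.sin (π / (2 * p)) ^ 2
          - 2 * π * ((π / (2 * p)) * (Real.sin (π / (2 * p)) * Real.cos (π / (2 * p))))
          - 4 * (π / (2 * p)) ^ 2 = 0 := by
        rcases mul_eq_zero.mp h with h' | h'
        · exact absurd h' hc.ne'
        · exact h'
      have hθ := hiff.mp hF0
      field_simp at hθ
      linarith
    · intro h
      subst h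
      rw [hiff.mpr (by norm_num), mul_zero]
end

section
/- Let p ≥ 2. Then π/(2p) ≤ tan(π/(2p)) ≤ (4 − π)/p² + π/(2p). -/
open Real

lemma c_lower : (0.3478:ℝ) ≤ 4 * (4 - π) / π ^ 2 := by
  have hπl : (3.141592 : ℝ) < π := Real.pi_gt_d6
  have hπu : π < 3.141593 := Real.pi_lt_d6
  rw [le_div_iff₀ (by positivity)]
  nlinarith

lemma c_upper : 4 * (4 - π) / π ^ 2 ≤ (0.348:ℝ) := by
  have hπl : (3.141592 : ℝ) < π := Real.pi_gt_d6
  have hπu : π < 3.141593 := Real.pi_lt_d6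
  rw [div_le_iff₀ (by positivity)]
  nlinarith

/-- Taylor-type upper bound for `tan` on `(0, 0.66]`. -/
lemma tan_upper_small {x : ℝ} (hx0 : 0 < x) (hx1 : x ≤ 0.66) :
    Real.tan x ≤ x + (4 * (4 - π) / π ^ 2) * x ^ 2 := by
  have hπ : (0:ℝ) < π := Real.pi_pos
  have hc1 := c_lower
  have hc2 := c_upper
  set c : ℝ := 4 * (4 - π) / π ^ 2 with hcdef
  have hxabs : |x| ≤ 1 := by rw [abs_of_pos hx0]; linarith
  have hs := abs_le.1 (Real.sin_bound hxabs)
  have hcb := abs_le.1 (Real.cos_bound hxabs)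
  rw [abs_of_pos hx0] at hs hcb
  have hcos : 0 < Real.cos x := Real.cos_pos_of_le_one hxabs
  have hsu : Real.sin x ≤ x - x ^ 3 / 6 + x ^ 4 * (5 / 96) := by nlinarith [hs.2, mul_nonneg (pow_pos hx0 4).le (sub_nonneg.2 hx1)]
  have hcl : 1 - x ^ 2 / 2 - x ^ 4 * (5 / 96) ≤ Real.cos x := by linarith [hcb.1]
  have hcoef : 0 < x + c * x ^ 2 := by positivity
  rw [Real.tan_eq_sin_div_cos, div_le_iff₀ hcos]
  have key : x - x ^ 3 / 6 + x ^ 4 * (5 / 96) ≤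
      (x + c * x ^ 2) * (1 - x ^ 2 / 2 - x ^ 4 * (5 / 96)) := by
    nlinarith [sq_nonneg x, pow_pos hx0 3, pow_pos hx0 4, pow_pos hx0 5,
      mul_nonneg (mul_nonneg hx0.le hx0.le) (sub_nonneg.2 hx1),
      mul_nonneg (mul_nonneg (mul_nonneg hx0.le hx0.le) hx0.le) (sub_nonneg.2 hx1)]
  calc Real.sin x ≤ x - x ^ 3 / 6 + x ^ 4 * (5 / 96) := hsu
    _ ≤ (x + c * x ^ 2) * (1 - x ^ 2 / 2 - x ^ 4 * (5 / 96)) := key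
    _ ≤ (x + c * x ^ 2) * Real.cos x := mul_le_mul_of_nonneg_left hcl hcoef.le

/-- On `[0.66, π/4]`, the derivative of `tan y - y - c y²` is nonnegative. -/
lemma tan_sq_ge {y : ℝ} (h1 : (0.66:ℝ) ≤ y) (h2 : y ≤ π / 4) :
    2 * (4 * (4 - π) / π ^ 2) * y ≤ Real.tan y ^ 2 := by
  have hπl : (3.141592 : ℝ) < π := Real.pi_gt_d6
  have hπu : π < 3.141593 := Real.pi_lt_d6
  have hc2 := c_upper
  set c : ℝ := 4 * (4 - π) / π ^ 2 with hcdef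
  have hy1 : y ≤ 0.7854 := by linarith
  have hy0 : (0:ℝ) < y := by linarith
  -- `tan 0.66 ≥ 0.76` via Taylor bounds
  have habs : |(0.66:ℝ)| ≤ 1 := by rw [abs_of_pos] <;> norm_num
  have hs := abs_le.1 (Real.sin_bound habs)
  have hcb := abs_le.1 (Real.cos_bound habs)
  rw [abs_of_pos (by norm_num : (0:ℝ) < 0.66)] at hs hcb
  have hcos066 : 0 < Real.cos 0.66 := Real.cos_pos_of_le_one habs
  have hsl : (0.6022:ℝ) ≤ Real.sin 0.66 := by nlinarith [hs.1]
  have hcu : Real.cos 0.66 ≤ 0.7921 := by nlinarith [hcb.2]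
  have htan066 : (0.76:ℝ) ≤ Real.tan 0.66 := by
    rw [Real.tan_eq_sin_div_cos, le_div_iff₀ hcos066]
    nlinarith
  have hmono : Real.tan 0.66 ≤ Real.tan y := by
    rcases eq_or_lt_of_le h1 with h | h
    · rw [h]
    · exact (Real.tan_lt_tan_of_nonneg_of_lt_pi_div_two (by norm_num)
        (by linarith) h).le
  have htany : (0.76:ℝ) ≤ Real.tan y := le_trans htan066 hmono
  have hsq : (0.5776:ℝ) ≤ Real.tan y ^ 2 := by nlinarith
  nlinarith

/-- Monotonicity region: `tan x ≤ x + c x²` on `[0.66, π/4]`. -/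
lemma tan_upper_big {x : ℝ} (h1 : (0.66:ℝ) ≤ x) (h2 : x ≤ π / 4) :
    Real.tan x ≤ x + (4 * (4 - π) / π ^ 2) * x ^ 2 := by
  have hπl : (3.141592 : ℝ) < π := Real.pi_gt_d6
  have hπu : π < 3.141593 := Real.pi_lt_d6
  set c : ℝ := 4 * (4 - π) / π ^ 2 with hcdef
  set g : ℝ → ℝ := fun y => Real.tan y - y - c * y ^ 2 with hg
  have hcospos : ∀ y ∈ Set.Icc (0.66:ℝ) (π/4), 0 < Real.cos y := by
    intro y hy
    apply Real.cos_pos_of_mem_Ioo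
    constructor
    · linarith [hy.1]
    · linarith [hy.2]
  have hderiv : ∀ y ∈ Set.Icc (0.66:ℝ) (π/4),
      HasDerivAt g (1 / Real.cos y ^ 2 - 1 - c * (2 * y)) y := by
    intro y hy
    have h1 := Real.hasDerivAt_tan (hcospos y hy).ne'
    have h2 : HasDerivAt (fun y : ℝ => y) 1 y := hasDerivAt_id y
    have h3 : HasDerivAt (fun y : ℝ => c * y ^ 2) (c * (2 * y)) y := by
      simpa using (hasDerivAt_pow 2 y).const_mul c
    exact (h1.sub h2).sub h3
  have hmono : MonotoneOn g (Set.Icc (0.66:ℝ) (π/4)) := by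
    apply monotoneOn_of_deriv_nonneg (convex_Icc _ _)
    · intro y hy
      exact (hderiv y hy).continuousAt.continuousWithinAt
    · intro y hy
      rw [interior_Icc] at hy
      exact ((hderiv y (Set.mem_Icc_of_Ioo hy)).differentiableAt).differentiableWithinAt
    · intro y hy
      rw [interior_Icc] at hy
      have hy' := Set.mem_Icc_of_Ioo hy
      rw [(hderiv y hy').deriv]
      have hcy : Real.cos y ≠ 0 := (hcospos y hy').ne'
      have htansq : Real.tan y ^ 2 = 1 / Real.cos y ^ 2 - 1 := by
        rw [Real.tan_eq_sin_div_cos, div_pow, Real.sin_sq]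
        field_simp
      have := tan_sq_ge hy'.1 hy'.2
      rw [htansq] at this
      linarith
  have hle : g x ≤ g (π/4) :=
    hmono (Set.mem_Icc.2 ⟨h1, h2⟩) (Set.mem_Icc.2 ⟨by linarith, le_refl _⟩) h2
  have hgq : g (π/4) = 0 := by
    rw [hg]
    simp only [Real.tan_pi_div_four]
    rw [hcdef]
    field_simp
    ring
  rw [hgq] at hle
  simp only [hg] at hle
  linarith

/-- The double inequality `π/(2p) ≤ tan(π/(2p)) ≤ (4 − π)/p² + π/(2p)` used in
the final part of the proof of Theorem 1.3. -/
theorem tan_double_bound (p : ℝ) (hp : 2 ≤ p) :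
    π / (2 * p) ≤ Real.tan (π / (2 * p)) ∧
    Real.tan (π / (2 * p)) ≤ (4 - π) / p ^ 2 + π / (2 * p) := by
  have hπ : (0:ℝ) < π := Real.pi_pos
  have hp0 : (0:ℝ) < p := by linarith
  set x := π / (2 * p) with hxdef
  have hx0 : 0 < x := by positivity
  have hx4 : x ≤ π / 4 := by
    rw [hxdef, div_le_div_iff₀ (by positivity) (by norm_num)]
    nlinarith
  have hx2 : x < π / 2 := lt_of_le_of_lt hx4 (by linarith)
  constructor
  · exact Real.le_tan hx0.le hx2
  · have key : Real.tan x ≤ x + (4 * (4 - π) / π ^ 2) * x ^ 2 := by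
      rcases le_or_gt x 0.66 with h | h
      · exact tan_upper_small hx0 h
      · exact tan_upper_big h.le hx4
    have heq : (4 * (4 - π) / π ^ 2) * x ^ 2 = (4 - π) / p ^ 2 := by
      rw [hxdef]
      field_simp
      ring
    rw [heq] at key
    linarith
end

section
/- Let p > 2 and c > 0. Set q = π/p, S = √(1 + c² + 2c·cos(2q)), and R = 2c·cos(q)/(c − 1 + S). Then c − 1 + S > 0, cos q < R < 1/cos q, and c·(R − cos q) = R·(1 − R·cos q) (equivalently, c = R·(1 − R·cos q)/(R − cos q)). -/
open Real

/-- The change of parameter at the start of the proof of Theorem 1.3: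
with `q = π/p`, `S = √(1 + c² + 2c cos 2q)` and `R = 2c cos q/(c − 1 + S)`,
one has `c − 1 + S > 0`, `cos q < R < sec q` and
`c (R − cos q) = R (1 − R cos q)`. -/
theorem change_of_parameter (p c : ℝ) (hp : 2 < p) (hc : 0 < c)
    (q S R : ℝ) (hq : q = π / p)
    (hS : S = Real.sqrt (1 + c ^ 2 + 2 * c * Real.cos (2 * q)))
    (hR : R = 2 * c * Real.cos q / (c - 1 + S)) :
    0 < c - 1 + S ∧
    Real.cos q < R ∧
    R < 1 / Real.cos q ∧
    c * (R - Real.cos q) = R * (1 - R * Real.cos q) := by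
  have hπ := Real.pi_pos
  have hq0 : 0 < q := by
    rw [hq]; positivity
  have hqlt : q < π / 2 := by
    rw [hq]
    exact div_lt_div_of_pos_left hπ (by norm_num) hp
  have hcq : 0 < Real.cos q := Real.cos_pos_of_mem_Ioo ⟨by linarith, hqlt⟩
  have hcq1 : Real.cos q < 1 := by
    calc Real.cos q < Real.cos 0 := by
          apply Real.cos_lt_cos_of_nonneg_of_le_pi le_rfl (by linarith) hq0
      _ = 1 := Real.cos_zero
  have harg : 1 + c ^ 2 + 2 * c * Real.cos (2 * q)
      = (c - 1)^2 + 4 * c * Real.cos q ^ 2 := by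
    rw [Real.cos_two_mul]; ring
  have hS0 : 0 ≤ S := by rw [hS]; exact Real.sqrt_nonneg _
  have hS2 : S ^ 2 = (c - 1)^2 + 4 * c * Real.cos q ^ 2 := by
    rw [hS, sq, Real.mul_self_sqrt (by nlinarith), harg]
  have hden : 0 < c - 1 + S := by
    by_contra h
    push_neg at h
    nlinarith [mul_pos hc (mul_pos hcq hcq),
      mul_nonneg (by linarith : (0:ℝ) ≤ 1 - c - S) (by linarith : (0:ℝ) ≤ 1 - c + S)]
  have hSlt : S < c + 1 := by
    by_contra h
    push_neg at h
    nlinarith [mul_pos hc (mul_pos (by linarith : (0:ℝ) < 1 - Real.cos q) (by linarith : (0:ℝ) < 1 + Real.cos q)),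
      mul_nonneg (by linarith : (0:ℝ) ≤ S - c - 1) (by linarith : (0:ℝ) ≤ S + c + 1)]
  refine ⟨hden, ?_, ?_, ?_⟩
  · rw [hR, lt_div_iff₀ hden]
    nlinarith
  · rw [hR, div_lt_div_iff₀ hden hcq]
    nlinarith [sq_nonneg (S - (1 - c + 2 * c * Real.cos q ^ 2)), sq_nonneg (Real.cos q * (1 - Real.cos q)), mul_pos hc (mul_pos hcq hcq)]
  · rw [hR]
    have hne : c - 1 + S ≠ 0 := ne_of_gt hden
    field_simp
    linear_combination (-1) * hS2
end
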